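/- arXiv:1303.5777 — 8 statements merged into one kernel-verified Lean document; each statement's English description precedes it below -/
import Mathlib

section
/- For all natural numbers e, r, and k, there exists a natural number M such that for every coloring f of the e-element subsets of {0, 1, …, M} into r colors, there is a nonempty subset Y of {0, 1, …, M} such that f is constant on the e-element subsets of Y and the cardinality of Y is at least min(Y) + k − 1. -/
/-- Infinite Ramsey theorem on ℕ, relativized to an infinite set. -/
lemma inf_ramsey (r : ℕ) (hr : 0 < r) :
    ∀ (e : ℕ) (g : Finset ℕ → ℕ), (∀ s : Finset ℕ, s.card = e → g s < r) →
    ∀ A : Set ℕ, A.Infinite →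
    ∃ H : Set ℕ, H ⊆ A ∧ H.Infinite ∧
      ∃ c : ℕ, ∀ s : Finset ℕ, ↑s ⊆ H → s.card = e → g s = c := by
  intro e
  induction e with
  | zero =>
    intro g hg A hA
    refine ⟨A, le_refl _, hA, g ∅, fun s hs hcard => ?_⟩
    simp [Finset.card_eq_zero.mp hcard]
  | succ e ih =>
    intro g hg A hA
    have step : ∀ B : Set ℕ, B.Infinite → ∃ B' : Set ℕ, B' ⊆ B ∧ B'.Infinite ∧
        (∀ x ∈ B', sInf B < x) ∧
        ∃ c : ℕ, ∀ s : Finset ℕ, ↑s ⊆ B' → s.card = e → g (insert (sInf B) s) = c := by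
      intro B hB
      set a := sInf B with ha
      have hB' : (B ∩ {x | a < x}).Infinite := by
        have h1 : B \ {x | a < x} ⊆ Set.Iic a := by
          intro x hx
          simpa using hx.2
        have : (B ∩ {x | a < x}) = B \ (B \ {x | a < x}) := by
          ext x; by_cases hx : x ∈ B <;> simp [hx]
        rw [this]
        exact hB.diff ((Set.finite_Iic a).subset h1)
      obtain ⟨H', hH'sub, hH'inf, c, hc⟩ :=
        ih (fun s => if a ∈ s then 0 else g (insert a s))
          (by
            intro s hs
            by_cases h : a ∈ s
            · simpa [h] using hr
            · simpa [h] using hg (insert a s) (by rw [Finset.card_insert_of_notMem h, hs]))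
          (B ∩ {x | a < x}) hB'
      refine ⟨H', hH'sub.trans Set.inter_subset_left, hH'inf,
        fun x hx => (hH'sub hx).2, c, ?_⟩
      intro s hs hcard
      have hna : a ∉ s := by
        intro h
        exact lt_irrefl a ((hH'sub (hs h)).2)
      simpa [hna] using hc s hs hcard
    choose! step' hsub hinf hgt col hcol using step
    set F : ℕ → Set ℕ := fun n => Nat.rec A (fun _ B => step' B) n with hF
    have hFinf : ∀ n, (F n).Infinite := by
      intro n
      induction n with
      | zero => exact hA
      | succ n ihn => exact hinf _ ihn
    have hFsucc : ∀ n, F (n + 1) = step' (F n) := fun n => rfl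
    have hFstep : ∀ n, F (n + 1) ⊆ F n := fun n => hsub _ (hFinf n)
    have hFmono : ∀ m n, m ≤ n → F n ⊆ F m := by
      intro m n h
      induction h with
      | refl => exact le_refl _
      | step h ihn => exact (hFstep _).trans ihn
    set a : ℕ → ℕ := fun n => sInf (F n) with haa
    have hamem : ∀ n, a n ∈ F n := fun n => Nat.sInf_mem (hFinf n).nonempty
    have hagt : ∀ n, ∀ x ∈ F (n + 1), a n < x := fun n => hgt _ (hFinf n)
    have hasm : StrictMono a :=
      strictMono_nat_of_lt_succ (fun n => hagt n _ (hamem (n + 1)))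
    have hcoln : ∀ n, ∀ s : Finset ℕ, ↑s ⊆ F (n + 1) → s.card = e →
        g (insert (a n) s) = col (F n) := fun n => hcol _ (hFinf n)
    have hcollt : ∀ n, col (F n) < r := by
      intro n
      obtain ⟨s, hs, hcard⟩ := (hFinf (n + 1)).exists_subset_card_eq e
      rw [← hcoln n s hs hcard]
      refine hg _ ?_
      rw [Finset.card_insert_of_notMem, hcard]
      intro h
      exact lt_irrefl _ (hagt n _ (hs h))
    have hpig : ∃ c : ℕ, {n : ℕ | col (F n) = c}.Infinite := by
      by_contra h
      push_neg at h
      have : (Set.univ : Set ℕ).Finite := by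
        have hsub2 : (Set.univ : Set ℕ) ⊆ ⋃ c ∈ Finset.range r, {n : ℕ | col (F n) = c} := by
          intro n _
          simp only [Set.mem_iUnion, Finset.mem_range]
          exact ⟨col (F n), hcollt n, rfl⟩
        exact (Set.Finite.biUnion (Finset.finite_toSet _) (fun c _ => h c)).subset hsub2
      exact Set.infinite_univ this
    obtain ⟨c, hc⟩ := hpig
    refine ⟨a '' {n | col (F n) = c}, ?_, ?_, c, ?_⟩
    · rintro x ⟨n, _, rfl⟩
      exact hFmono 0 n (Nat.zero_le n) (hamem n)
    · exact hc.image (Set.injOn_of_injective hasm.injective)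
    · intro s hs hcard
      have hsne : s.Nonempty := Finset.card_pos.mp (by omega)
      obtain ⟨n, hnc, hmn⟩ := hs (s.min'_mem hsne)
      have hkey : ↑(s.erase (s.min' hsne)) ⊆ F (n + 1) := by
        intro x hx
        simp only [Finset.coe_erase, Set.mem_diff, Finset.mem_coe, Set.mem_singleton_iff] at hx
        obtain ⟨j, hjc, hjx⟩ := hs hx.1
        have hlt : a n < a j := by
          rw [hmn, hjx]
          exact lt_of_le_of_ne (s.min'_le x hx.1) (Ne.symm hx.2)
        have hnj : n + 1 ≤ j := hasm.lt_iff_lt.mp hlt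
        rw [← hjx]
        exact hFmono (n + 1) j hnj (hamem j)
      have hcard' : (s.erase (s.min' hsne)).card = e := by
        rw [Finset.card_erase_of_mem (s.min'_mem hsne), hcard]
        omega
      have hthis := hcoln n _ hkey hcard'
      rw [hmn, Finset.insert_erase (s.min'_mem hsne)] at hthis
      exact hthis.trans hnc

lemma ultra_pigeon (U : Ultrafilter ℕ) (h : ℕ → ℕ) :
    ∀ r : ℕ, (∀ᶠ M in (U : Filter ℕ), h M < r) →
      ∃ c : ℕ, c < r ∧ ∀ᶠ M in (U : Filter ℕ), h M = c := by
  intro r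
  induction r with
  | zero =>
    intro hev
    obtain ⟨M, hM⟩ := hev.exists
    omega
  | succ r ih =>
    intro hev
    by_cases hc : {M : ℕ | h M = r} ∈ U
    · exact ⟨r, Nat.lt_succ_self r, hc⟩
    · have hcc : {M : ℕ | h M = r}ᶜ ∈ U := Ultrafilter.compl_mem_iff_notMem.mpr hc
      have : ∀ᶠ M in (U : Filter ℕ), h M < r := by
        filter_upwards [hev, hcc] with M h1 h2
        simp only [Set.mem_compl_iff, Set.mem_setOf_eq] at h2
        omega
      obtain ⟨c, hcr, hcev⟩ := ih this
      exact ⟨c, Nat.lt_succ_of_lt hcr, hcev⟩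

/-- **Paris–Harrington theorem (PH).** For all natural numbers `e`, `r`, `k`,
there exists `M` such that every coloring `f` of the `e`-element subsets of
`{0, 1, …, M}` into `r` colors admits a nonempty `f`-homogeneous subset `Y` of
`{0, 1, …, M}` whose cardinality is at least `min Y + k - 1`. -/
theorem paris_harrington (e r k : ℕ) :
    ∃ M : ℕ, ∀ f : Finset ℕ → ℕ,
      (∀ s : Finset ℕ, s ⊆ Finset.range (M + 1) → s.card = e → f s < r) →
      ∃ Y : Finset ℕ, Y ⊆ Finset.range (M + 1) ∧ ∃ hY : Y.Nonempty,
        (∀ s t : Finset ℕ, s ⊆ Y → t ⊆ Y → s.card = e → t.card = e → f s = f t) ∧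
        Y.card + 1 ≥ Y.min' hY + k := by
  by_contra hcon
  push_neg at hcon
  choose f hf1 hf2 using hcon
  have hr : 0 < r := by
    have := hf1 e (Finset.range e)
      (by intro x hx; simp only [Finset.mem_range] at hx ⊢; omega) (Finset.card_range e)
    omega
  set U := Filter.hyperfilter ℕ with hU
  have hcof : ∀ s : Finset ℕ, {M : ℕ | s ⊆ Finset.range (M + 1)} ∈ (U : Filter ℕ) := by
    intro s
    apply Filter.hyperfilter_le_cofinite
    rw [Filter.mem_cofinite]
    apply (Set.finite_Iio (s.sup id)).subset
    intro M hM
    simp only [Set.mem_compl_iff, Set.mem_setOf_eq] at hM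
    simp only [Set.mem_Iio]
    by_contra hge
    push_neg at hge
    exact hM (fun x hx => Finset.mem_range.mpr
      (Nat.lt_succ_of_le (le_trans (Finset.le_sup (f := id) hx) hge)))
  have key : ∀ s : Finset ℕ, s.card = e →
      ∃ c : ℕ, c < r ∧ ∀ᶠ M in (U : Filter ℕ), f M s = c := by
    intro s hs
    apply ultra_pigeon
    filter_upwards [hcof s] with M hM
    exact hf1 M s hM hs
  choose! g hg1 hg2 using key
  obtain ⟨H, -, hHinf, c, hc⟩ := inf_ramsey r hr e g hg1 Set.univ Set.infinite_univ
  set m := sInf H with hm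
  have hmH : m ∈ H := Nat.sInf_mem hHinf.nonempty
  obtain ⟨Z, hZsub, hZcard⟩ := (hHinf.diff (Set.finite_singleton m)).exists_subset_card_eq (m + k)
  set Y : Finset ℕ := insert m Z with hYdef
  have hmZ : m ∉ Z := by
    intro h
    exact (hZsub h).2 rfl
  have hYH : ↑Y ⊆ H := by
    intro x hx
    rcases Finset.mem_insert.mp hx with h | h
    · rw [h]; exact hmH
    · exact (hZsub h).1
  have hYcard : Y.card = m + k + 1 := by
    rw [hYdef, Finset.card_insert_of_notMem hmZ, hZcard]
  have hYne : Y.Nonempty := ⟨m, Finset.mem_insert_self m Z⟩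
  have hmin : Y.min' hYne ≤ m := Finset.min'_le Y m (Finset.mem_insert_self m Z)
  have hS1 : ∀ᶠ M in (U : Filter ℕ), ∀ s ∈ Y.powerset, s.card = e → f M s = g s := by
    rw [Filter.eventually_all_finset]
    intro s _
    by_cases hcard : s.card = e
    · filter_upwards [hg2 s hcard] with M hM _
      exact hM
    · exact Filter.Eventually.of_forall (fun M h => absurd h hcard)
  obtain ⟨M, hM1, hM2⟩ := (hS1.and (hcof Y)).exists
  have hhom : ∀ s t : Finset ℕ, s ⊆ Y → t ⊆ Y → s.card = e → t.card = e →
      f M s = f M t := by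
    intro s t hsY htY hcs hct
    rw [hM1 s (Finset.mem_powerset.mpr hsY) hcs, hM1 t (Finset.mem_powerset.mpr htY) hct,
      hc s ((Finset.coe_subset.mpr hsY).trans hYH) hcs,
      hc t ((Finset.coe_subset.mpr htY).trans hYH) hct]
  have := hf2 M Y hM2 hYne hhom
  omega
end

section
/- For all natural numbers r and k, there exists a natural number M such that for every coloring f of the 2-element subsets of {0, 1, …, M} into r colors, there is a nonempty subset Y of {0, 1, …, M} such that f is constant on the 2-element subsets of Y and the cardinality of Y is at least min(Y) + k − 1. -/
open Set Filter

section RamseyInf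

variable (r : ℕ) (c : ℕ → ℕ → ℕ)

lemma pigeon_inf (S : Set ℕ) (hS : S.Infinite) (g : ℕ → ℕ)
    (hg : ∀ y ∈ S, g y < r) : ∃ j, j < r ∧ {y | y ∈ S ∧ g y = j}.Infinite := by
  by_contra h
  push_neg at h
  have hsub : S ⊆ ⋃ j ∈ Finset.range r, {y | y ∈ S ∧ g y = j} := by
    intro y hy
    exact Set.mem_biUnion (Finset.mem_range.2 (hg y hy)) ⟨hy, rfl⟩
  have hfin : (⋃ j ∈ Finset.range r, {y | y ∈ S ∧ g y = j}).Finite :=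
    Set.Finite.biUnion (Finset.range r).finite_toSet
      (fun j hj => (h j (Finset.mem_range.1 hj)))
  exact hS (hfin.subset hsub)

open Classical in
noncomputable def jsel (S : Set ℕ) : ℕ :=
  if h : ∃ j, j < r ∧ {y | (y ∈ S ∧ sInf S < y) ∧ c (sInf S) y = j}.Infinite
  then h.choose else 0

noncomputable def nextSet (S : Set ℕ) : Set ℕ :=
  {y | (y ∈ S ∧ sInf S < y) ∧ c (sInf S) y = jsel r c S}

lemma nextSet_spec (hr : 0 < r) (hc : ∀ a b, c a b < r) {S : Set ℕ}
    (hS : S.Infinite) : (nextSet r c S).Infinite ∧ jsel r c S < r := by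
  have h1 : ({y | y ∈ S ∧ sInf S < y}).Infinite := by
    have he : S \ Set.Iic (sInf S) = {y | y ∈ S ∧ sInf S < y} := by
      ext y; simp [not_le]
    rw [← he]
    exact hS.diff (Set.finite_Iic _)
  obtain ⟨j, hj, hinf⟩ := pigeon_inf r _ h1 (c (sInf S)) (fun y _ => hc _ y)
  have hex : ∃ j, j < r ∧ {y | (y ∈ S ∧ sInf S < y) ∧ c (sInf S) y = j}.Infinite :=
    ⟨j, hj, hinf⟩
  constructor
  · show ({y | (y ∈ S ∧ sInf S < y) ∧ c (sInf S) y = jsel r c S}).Infinite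
    rw [jsel, dif_pos hex]
    exact hex.choose_spec.2
  · rw [jsel, dif_pos hex]; exact hex.choose_spec.1

noncomputable def ramseySeq : ℕ → Set ℕ
  | 0 => Set.univ
  | n + 1 => nextSet r c (ramseySeq n)

lemma ramseySeq_infinite (hr : 0 < r) (hc : ∀ a b, c a b < r) :
    ∀ n, (ramseySeq r c n).Infinite := by
  intro n
  induction n with
  | zero => exact Set.infinite_univ
  | succ n ih => exact (nextSet_spec r c hr hc ih).1

lemma ramseySeq_succ_subset (n : ℕ) : ramseySeq r c (n + 1) ⊆ ramseySeq r c n :=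
  fun y hy => hy.1.1

lemma ramseySeq_subset {m n : ℕ} (h : m ≤ n) : ramseySeq r c n ⊆ ramseySeq r c m := by
  induction n with
  | zero => simp_all
  | succ n ih =>
    rcases Nat.lt_or_ge m (n + 1) with h' | h'
    · exact (ramseySeq_succ_subset r c n).trans (ih (Nat.lt_succ_iff.1 h'))
    · have : m = n + 1 := le_antisymm h h'
      subst this; exact fun _ h => h

theorem ramsey_pairs_inf (hr : 0 < r) (hc : ∀ a b, c a b < r) :
    ∃ (H : Set ℕ) (j : ℕ), H.Infinite ∧ j < r ∧
      ∀ a ∈ H, ∀ b ∈ H, a < b → c a b = j := by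
  set x : ℕ → ℕ := fun n => sInf (ramseySeq r c n) with hx
  set J : ℕ → ℕ := fun n => jsel r c (ramseySeq r c n) with hJ
  have hmem : ∀ n, x n ∈ ramseySeq r c n :=
    fun n => Nat.sInf_mem (ramseySeq_infinite r c hr hc n).nonempty
  have key : ∀ m n, m < n → x m < x n ∧ c (x m) (x n) = J m := by
    intro m n hmn
    have h1 : x n ∈ ramseySeq r c (m + 1) :=
      ramseySeq_subset r c hmn (hmem n)
    exact ⟨h1.1.2, h1.2⟩
  have hxmono : StrictMono x := fun m n h => (key m n h).1
  have hJlt : ∀ n, J n < r :=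
    fun n => (nextSet_spec r c hr hc (ramseySeq_infinite r c hr hc n)).2
  obtain ⟨j, hj, hinf⟩ := pigeon_inf r Set.univ Set.infinite_univ J
    (fun n _ => hJlt n)
  refine ⟨x '' {n | n ∈ Set.univ ∧ J n = j}, j,
    hinf.image (hxmono.injective.injOn), hj, ?_⟩
  rintro a ⟨m, hm, rfl⟩ b ⟨n, hn, rfl⟩ hab
  have hmn : m < n := hxmono.lt_iff_lt.1 hab
  rw [(key m n hmn).2, hm.2]

end RamseyInf

open Classical in
noncomputable def limitColor (U : Ultrafilter ℕ) (F : ℕ → Finset ℕ → ℕ) (r : ℕ)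
    (s : Finset ℕ) : ℕ :=
  if h : ∃ v, v < r ∧ {M | F M s = v} ∈ U then h.choose else 0

lemma limitColor_lt {U : Ultrafilter ℕ} {F : ℕ → Finset ℕ → ℕ} {r : ℕ}
    (hr : 0 < r) (s : Finset ℕ) : limitColor U F r s < r := by
  rw [limitColor]
  split_ifs with h
  · exact h.choose_spec.1
  · exact hr

lemma limitColor_mem {U : Ultrafilter ℕ} {F : ℕ → Finset ℕ → ℕ} {r : ℕ}
    {s : Finset ℕ} (h : ∃ v, v < r ∧ {M | F M s = v} ∈ U) :
    {M | F M s = limitColor U F r s} ∈ U := by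
  rw [limitColor, dif_pos h]
  exact h.choose_spec.2

/-- **Paris–Harrington theorem for pairs (PH²).** For all natural numbers `r`, `k`,
there exists `M` such that every coloring `f` of the 2-element subsets of
`{0, 1, …, M}` into `r` colors admits a nonempty `f`-homogeneous subset `Y` of
`{0, 1, …, M}` whose cardinality is at least `min Y + k - 1`. -/
theorem paris_harrington_pairs (r k : ℕ) :
    ∃ M : ℕ, ∀ f : Finset ℕ → ℕ,
      (∀ s : Finset ℕ, s ⊆ Finset.range (M + 1) → s.card = 2 → f s < r) →
      ∃ Y : Finset ℕ, Y ⊆ Finset.range (M + 1) ∧ ∃ hY : Y.Nonempty,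
        (∀ s t : Finset ℕ, s ⊆ Y → t ⊆ Y → s.card = 2 → t.card = 2 → f s = f t) ∧
        Y.card + 1 ≥ Y.min' hY + k := by
  rcases Nat.eq_zero_or_pos r with hr | hr
  · -- r = 0 : the hypothesis is contradictory
    refine ⟨1, fun f hf => absurd (hf {0, 1} ?_ ?_) ?_⟩
    · intro x hx; fin_cases hx <;> simp
    · decide
    · simp [hr]
  by_contra hcon
  push_neg at hcon
  -- for every M choose a bad coloring
  have hbad : ∀ M : ℕ, ∃ f : Finset ℕ → ℕ,
      (∀ s : Finset ℕ, s ⊆ Finset.range (M + 1) → s.card = 2 → f s < r) ∧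
      ∀ Y : Finset ℕ, Y ⊆ Finset.range (M + 1) → ∀ hY : Y.Nonempty,
        (∀ s t : Finset ℕ, s ⊆ Y → t ⊆ Y → s.card = 2 → t.card = 2 → f s = f t) →
        Y.card + 1 < Y.min' hY + k := by
    intro M
    obtain ⟨f, hf1, hf2⟩ := hcon M
    exact ⟨f, hf1, hf2⟩
  set F : ℕ → Finset ℕ → ℕ := fun M => (hbad M).choose with hF
  have hF1 : ∀ M, ∀ s : Finset ℕ, s ⊆ Finset.range (M + 1) → s.card = 2 → F M s < r :=
    fun M => (hbad M).choose_spec.1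
  have hF2 : ∀ M, ∀ Y : Finset ℕ, Y ⊆ Finset.range (M + 1) → ∀ hY : Y.Nonempty,
      (∀ s t : Finset ℕ, s ⊆ Y → t ⊆ Y → s.card = 2 → t.card = 2 → F M s = F M t) →
      Y.card + 1 < Y.min' hY + k :=
    fun M => (hbad M).choose_spec.2
  set U : Ultrafilter ℕ := Filter.hyperfilter ℕ with hU
  -- limit coloring
  set g : Finset ℕ → ℕ := limitColor U F r with hg
  have hex : ∀ s : Finset ℕ, s.card = 2 → ∃ v, v < r ∧ {M | F M s = v} ∈ U := by
    intro s hs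
    have hsne : s.Nonempty := Finset.card_pos.1 (by omega)
    have hA : {M | s.max' hsne ≤ M} ∈ U := by
      apply Filter.mem_hyperfilter_of_finite_compl
      have : {M | s.max' hsne ≤ M}ᶜ ⊆ Set.Iio (s.max' hsne) := by
        intro M hM
        simp only [Set.mem_compl_iff, Set.mem_setOf_eq, not_le] at hM
        exact hM
      exact (Set.finite_Iio _).subset this
    have hsub : {M | s.max' hsne ≤ M} ⊆ ⋃ v ∈ Finset.range r, {M | F M s = v} := by
      intro M hM
      have hsr : s ⊆ Finset.range (M + 1) := by
        intro x hx
        exact Finset.mem_range.2 (Nat.lt_succ_of_le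
          (le_trans (Finset.le_max' s x hx) hM))
      exact Set.mem_biUnion (Finset.mem_range.2 (hF1 M s hsr hs)) rfl
    have hUnion : (⋃ v ∈ Finset.range r, {M | F M s = v}) ∈ U :=
      Filter.mem_of_superset hA hsub
    obtain ⟨v, hv, hvU⟩ := (Ultrafilter.finite_biUnion_mem_iff
      (Finset.range r).finite_toSet).1 hUnion
    exact ⟨v, Finset.mem_range.1 hv, hvU⟩
  -- pair coloring
  set c : ℕ → ℕ → ℕ := fun a b => g {a, b} with hc
  have hclt : ∀ a b, c a b < r := fun a b => limitColor_lt hr _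
  obtain ⟨H, j, hHinf, hjr, hHcol⟩ := ramsey_pairs_inf r c hr hclt
  -- build the large homogeneous finite set
  set m0 : ℕ := sInf H with hm0
  have hm0H : m0 ∈ H := Nat.sInf_mem hHinf.nonempty
  obtain ⟨t, htH, htfin, htcard⟩ := hHinf.exists_subset_ncard_eq (m0 + k)
  set Y : Finset ℕ := insert m0 htfin.toFinset with hYdef
  have hYH : ∀ y ∈ Y, y ∈ H := by
    intro y hy
    rw [hYdef, Finset.mem_insert] at hy
    rcases hy with rfl | hy
    · exact hm0H
    · exact htH (htfin.mem_toFinset.1 hy)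
  have hYne : Y.Nonempty := ⟨m0, Finset.mem_insert_self _ _⟩
  have hYmin : Y.min' hYne = m0 := by
    apply le_antisymm
    · exact Finset.min'_le _ _ (Finset.mem_insert_self _ _)
    · exact Finset.le_min' _ _ _ (fun y hy => Nat.sInf_le (hYH y hy))
  have hYcard : m0 + k ≤ Y.card := by
    have h1 : htfin.toFinset.card = m0 + k := by
      rw [← htcard, Set.ncard_eq_toFinset_card _ htfin]
    calc m0 + k = htfin.toFinset.card := h1.symm
      _ ≤ Y.card := Finset.card_le_card (Finset.subset_insert _ _)
  -- g is constant (= j) on pairs from Y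
  have hghom : ∀ s : Finset ℕ, s ⊆ Y → s.card = 2 → g s = j := by
    intro s hsY hs
    obtain ⟨a, b, hab, rfl⟩ := Finset.card_eq_two.1 hs
    have haH : a ∈ H := hYH a (hsY (by simp))
    have hbH : b ∈ H := hYH b (hsY (by simp))
    rcases (Ne.lt_or_gt hab) with h' | h'
    · exact hHcol a haH b hbH h'
    · rw [Finset.pair_comm]
      exact hHcol b hbH a haH h'
  -- find M where F M agrees with g on all pairs of Y, and M is big
  have hT : (⋂ p ∈ Y.powersetCard 2, {M | F M p = g p}) ∈ U := by
    apply (Filter.biInter_finset_mem _).2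
    intro p hp
    obtain ⟨hpY, hpcard⟩ := Finset.mem_powersetCard.1 hp
    exact limitColor_mem (hex p hpcard)
  have hB : {M | Y.max' hYne ≤ M} ∈ U := by
    apply Filter.mem_hyperfilter_of_finite_compl
    have : {M | Y.max' hYne ≤ M}ᶜ ⊆ Set.Iio (Y.max' hYne) := by
      intro M hM
      simp only [Set.mem_compl_iff, Set.mem_setOf_eq, not_le] at hM
      exact hM
    exact (Set.finite_Iio _).subset this
  obtain ⟨M, hM1, hM2⟩ := Filter.nonempty_of_mem (Filter.inter_mem hT hB)
  have hYr : Y ⊆ Finset.range (M + 1) := by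
    intro x hx
    exact Finset.mem_range.2 (Nat.lt_succ_of_le (le_trans (Finset.le_max' Y x hx) hM2))
  have hagree : ∀ s : Finset ℕ, s ⊆ Y → s.card = 2 → F M s = g s := by
    intro s hsY hs
    have : M ∈ {M' | F M' s = g s} := by
      have hmem : s ∈ Y.powersetCard 2 := Finset.mem_powersetCard.2 ⟨hsY, hs⟩
      exact Set.mem_iInter₂.1 hM1 s hmem
    exact this
  have hhom : ∀ s t : Finset ℕ, s ⊆ Y → t ⊆ Y → s.card = 2 → t.card = 2 →
      F M s = F M t := by
    intro s t hs ht hcs hct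
    rw [hagree s hs hcs, hagree t ht hct, hghom s hs hcs, hghom t ht hct]
  have := hF2 M Y hYr hYne hhom
  rw [hYmin] at this
  omega
end

section
/- Let q ≥ 1 be a natural number, let A₁, …, A_q be nonnegative integers, and let B, C, D be integers with B ≠ 0. Set W = 1 + Σ_{i=1}^{q} A_i², and for a natural number n define the real number M_q(n) as the product, over all 2^q sign choices ε ∈ {−1, +1}^q, of the factors (B²·n + C² − B²·(2D − 1)·(C² + W^q + Σ_{i=1}^{q} ε_i·√(A_i)·W^{i−1})), where √ denotes the real square root. Then the following three conditions all hold — every A_i is a perfect square (of an integer), B divides C, and D > 0 — if and only if there exists a natural number n with M_q(n) = 0. -/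
open Finset

noncomputable section
namespace MRaux
open Real


def K (P : Finset ℕ) : Subfield ℝ := Subfield.closure {x | ∃ p ∈ P, x = Real.sqrt p}

lemma sqrt_mem {P : Finset ℕ} {p : ℕ} (hp : p ∈ P) : Real.sqrt p ∈ K P :=
  Subfield.subset_closure ⟨p, hp, rfl⟩

lemma K_mono {P P' : Finset ℕ} (h : P ⊆ P') : K P ≤ K P' :=
  Subfield.closure_le.2 (fun x ⟨p, hp, he⟩ => Subfield.subset_closure ⟨p, h hp, he⟩)

def Qf : Subfield ℝ where
  carrier := Set.range (fun q : ℚ => (q:ℝ))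
  zero_mem' := ⟨0, by push_cast; ring⟩
  one_mem' := ⟨1, by push_cast; ring⟩
  add_mem' := by rintro a b ⟨x, rfl⟩ ⟨y, rfl⟩; exact ⟨x + y, by push_cast; ring⟩
  mul_mem' := by rintro a b ⟨x, rfl⟩ ⟨y, rfl⟩; exact ⟨x * y, by push_cast; ring⟩
  neg_mem' := by rintro a ⟨x, rfl⟩; exact ⟨-x, by push_cast; ring⟩
  inv_mem' := by rintro a ⟨x, rfl⟩; exact ⟨x⁻¹, by push_cast; ring⟩

lemma K_empty {x : ℝ} (hx : x ∈ K ∅) : ∃ r : ℚ, x = r := by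
  have hQ : K ∅ ≤ Qf := by
    apply Subfield.closure_le.2; rintro y ⟨p, hp, _⟩; simp at hp
  obtain ⟨r, hr⟩ := hQ hx
  exact ⟨r, hr.symm⟩

/-- quadratic representation -/
lemma rep {P : Finset ℕ} {p : ℕ} (hp : Real.sqrt p ∉ K P) {x : ℝ}
    (hx : x ∈ K (insert p P)) : ∃ a ∈ K P, ∃ b ∈ K P, x = a + b * Real.sqrt p := by
  set s := Real.sqrt p with hs
  have hs2 : s * s = (p:ℝ) := Real.mul_self_sqrt (by positivity)
  set S : Subfield ℝ :=
    { carrier := {x | ∃ a ∈ K P, ∃ b ∈ K P, x = a + b * s}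
      zero_mem' := ⟨0, zero_mem _, 0, zero_mem _, by ring⟩
      one_mem' := ⟨1, one_mem _, 0, zero_mem _, by ring⟩
      add_mem' := by
        rintro x y ⟨a, ha, b, hb, rfl⟩ ⟨c, hc, d, hd, rfl⟩
        exact ⟨a + c, add_mem ha hc, b + d, add_mem hb hd, by ring⟩
      neg_mem' := by
        rintro x ⟨a, ha, b, hb, rfl⟩
        exact ⟨-a, neg_mem ha, -b, neg_mem hb, by ring⟩
      mul_mem' := by
        rintro x y ⟨a, ha, b, hb, rfl⟩ ⟨c, hc, d, hd, rfl⟩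
        refine ⟨a*c + b*d*(p:ℝ), ?_, a*d + b*c, ?_, ?_⟩
        · exact add_mem (mul_mem ha hc) (mul_mem (mul_mem hb hd) (natCast_mem _ p))
        · exact add_mem (mul_mem ha hd) (mul_mem hb hc)
        · rw [← hs2]; ring
      inv_mem' := by
        rintro x ⟨a, ha, b, hb, rfl⟩
        rcases eq_or_ne (a + b * s) 0 with h0 | h0
        · rw [h0, inv_zero]; exact ⟨0, zero_mem _, 0, zero_mem _, by ring⟩
        · have hD : a^2 - (p:ℝ) * b^2 ≠ 0 := by
            intro hD
            rcases eq_or_ne b 0 with hb0 | hb0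
            · apply h0; rw [hb0] at hD ⊢
              have : a = 0 := by nlinarith [sq_nonneg a]
              rw [this]; ring
            · apply hp
              have hcases : s = a/b ∨ s = -(a/b) := by
                have : (s - a/b) * (s + a/b) = 0 := by
                  field_simp
                  nlinarith [hs2]
                rcases mul_eq_zero.1 this with h | h
                · left; linarith
                · right; linarith
              rcases hcases with h | h
              · rw [h]; exact div_mem ha hb
              · rw [h]; exact neg_mem (div_mem ha hb)
          refine ⟨a / (a^2 - (p:ℝ)*b^2), ?_, -b / (a^2 - (p:ℝ)*b^2), ?_, ?_⟩
          · exact div_mem ha (sub_mem (pow_mem ha 2) (mul_mem (natCast_mem _ p) (pow_mem hb 2)))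
          · exact div_mem (neg_mem hb) (sub_mem (pow_mem ha 2) (mul_mem (natCast_mem _ p) (pow_mem hb 2)))
          · apply inv_eq_of_mul_eq_one_right
            field_simp
            rw [div_eq_one_iff_eq (by intro h; apply hD; linarith)]
            nlinarith [hs2] }
  have hle : K (insert p P) ≤ S := by
    apply Subfield.closure_le.2
    rintro y ⟨r, hr, rfl⟩
    rcases Finset.mem_insert.1 hr with rfl | hr
    · exact ⟨0, zero_mem _, 1, one_mem _, by rw [hs]; ring⟩
    · exact ⟨Real.sqrt r, sqrt_mem hr, 0, zero_mem _, by ring⟩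
  exact hle hx



lemma L : ∀ (n : ℕ) (P : Finset ℕ), P.card = n → (∀ p ∈ P, p.Prime) →
    ∀ d : ℕ, Squarefree d → Real.sqrt d ∈ K P → ∀ q, q.Prime → q ∣ d → q ∈ P := by
  intro n
  induction n with
  | zero =>
    intro P hc hP d hd hmem q hq hqd
    rw [Finset.card_eq_zero] at hc; subst hc
    obtain ⟨r, hr⟩ := K_empty hmem
    have hsq : IsSquare d := by
      by_contra h
      exact (irrational_sqrt_natCast_iff.2 h) ⟨r, hr.symm⟩
    obtain ⟨k, rfl⟩ := hsq
    have : IsUnit k := hd k (dvd_refl _)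
    rw [Nat.isUnit_iff] at this
    subst this
    exact absurd (Nat.le_of_dvd one_pos hqd) (by have := hq.two_le; omega)
  | succ n IH =>
    intro P hc hP d hd hmem q hq hqd
    obtain ⟨p, hpP⟩ := Finset.card_pos.1 (by omega : 0 < P.card)
    set P' := P.erase p with hP'
    have hc' : P'.card = n := by rw [hP', Finset.card_erase_of_mem hpP]; omega
    have hprimes' : ∀ r ∈ P', r.Prime := fun r hr => hP r (Finset.mem_of_mem_erase hr)
    have hpp : p.Prime := hP p hpP
    have hps : Real.sqrt p ∉ K P' := by
      intro h
      have := IH P' hc' hprimes' p hpp.squarefree h p hpp (dvd_refl p)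
      exact (Finset.notMem_erase p P) this
    have hPeq : P = insert p P' := by
      rw [hP', Finset.insert_erase hpP]
    rw [hPeq] at hmem
    obtain ⟨a, ha, b, hb, hab⟩ := rep hps hmem
    have hsd : Real.sqrt d * Real.sqrt d = (d:ℝ) := Real.mul_self_sqrt (by positivity)
    have hsp : Real.sqrt p * Real.sqrt p = (p:ℝ) := Real.mul_self_sqrt (by positivity)
    have hdeq : (d:ℝ) = a^2 + b^2*(p:ℝ) + 2*a*b*Real.sqrt p := by
      rw [← hsd, hab]; nlinarith [hsp]
    rcases eq_or_ne b 0 with hb0 | hb0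
    · -- √d = a ∈ K P'
      have : Real.sqrt d ∈ K P' := by rw [hab, hb0]; simpa using ha
      have := IH P' hc' hprimes' d hd this q hq hqd
      exact hPeq ▸ Finset.mem_insert_of_mem this
    rcases eq_or_ne a 0 with ha0 | ha0
    · -- √d = b √p
      rcases em (p ∣ d) with hpd | hpd
      · obtain ⟨e, rfl⟩ := hpd
        have hpe : ¬ p ∣ e := by
          rintro ⟨f, rfl⟩
          exact hpp.not_isUnit (hd p ⟨f, by ring⟩)
        have hse : Squarefree e := hd.squarefree_of_dvd ⟨p, by ring⟩
        have hsplit : Real.sqrt (((p*e:ℕ)):ℝ) = Real.sqrt p * Real.sqrt e := by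
          rw [show (((p*e:ℕ)):ℝ) = (p:ℝ)*(e:ℝ) by push_cast; ring]
          exact Real.sqrt_mul (by positivity) _
        have hppos : (0:ℝ) < Real.sqrt p := Real.sqrt_pos.2 (by exact_mod_cast hpp.pos)
        have hsqe : Real.sqrt e ∈ K P' := by
          have h1 : Real.sqrt p * Real.sqrt e = b * Real.sqrt p := by
            rw [← hsplit, hab, ha0]; ring
          have h2 : Real.sqrt e = b := by
            have := mul_right_cancel₀ (ne_of_gt hppos)
              (show Real.sqrt e * Real.sqrt p = b * Real.sqrt p by rw [← h1]; ring)
            exact this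
          rw [h2]; exact hb
        have hIH := IH P' hc' hprimes' e hse hsqe
        rcases (Nat.Prime.dvd_mul hq).1 hqd with hqp | hqe
        · have : q = p := (Nat.prime_dvd_prime_iff_eq hq hpp).1 hqp
          rw [this]; exact hpP
        · exact hPeq ▸ Finset.mem_insert_of_mem (hIH q hq hqe)
      · exfalso
        have hpd2 : Squarefree (p*d) :=
          (Nat.squarefree_mul ((Nat.Prime.coprime_iff_not_dvd hpp).2 hpd)).2 ⟨hpp.squarefree, hd⟩
        have hm : Real.sqrt (((p*d:ℕ)):ℝ) ∈ K P' := by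
          have hsplit : Real.sqrt (((p*d:ℕ)):ℝ) = Real.sqrt p * Real.sqrt d := by
            rw [show (((p*d:ℕ)):ℝ) = (p:ℝ)*(d:ℝ) by push_cast; ring]
            exact Real.sqrt_mul (by positivity) _
          rw [hsplit, hab, ha0]
          have h9 : Real.sqrt p * (0 + b*Real.sqrt p) = b * (Real.sqrt p * Real.sqrt p) := by ring
          rw [h9, hsp]
          exact Subfield.mul_mem _ hb (natCast_mem _ p)
        have := IH P' hc' hprimes' (p*d) hpd2 hm p hpp ⟨d, rfl⟩
        exact (Finset.notMem_erase p P) this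
    · -- a b ≠ 0 : √p ∈ K P'
      exfalso
      apply hps
      have : Real.sqrt p = ((d:ℝ) - a^2 - b^2*(p:ℝ))/(2*a*b) := by
        field_simp
        nlinarith [hdeq]
      rw [this]
      exact Subfield.div_mem _ (Subfield.sub_mem _ (Subfield.sub_mem _ (natCast_mem _ d) (pow_mem ha 2)) (Subfield.mul_mem _ (pow_mem hb 2) (natCast_mem _ p))) (Subfield.mul_mem _ (Subfield.mul_mem _ (by exact_mod_cast natCast_mem (K P') 2) ha) hb)



lemma sqrtd_mem : ∀ (d : ℕ) (P : Finset ℕ), (∀ q, q.Prime → q ∣ d → q ∈ P) →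
    Real.sqrt d ∈ K P := by
  intro d
  induction d using Nat.strong_induction_on with
  | _ d IH =>
  intro P hfac
  rcases Nat.lt_or_ge d 2 with hd2 | hd2
  · interval_cases d
    · simpa using Subfield.zero_mem (K P)
    · simpa using Subfield.one_mem (K P)
  · have hp : d.minFac.Prime := Nat.minFac_prime (by omega)
    obtain ⟨e, he⟩ : d.minFac ∣ d := Nat.minFac_dvd d
    have hel : e < d := by
      have h2 : 2 ≤ d.minFac := hp.two_le
      have he0 : 0 < e := by
        rcases Nat.eq_zero_or_pos e with rfl | h
        · omega
        · exact h
      nlinarith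
    have hsqrt : Real.sqrt d = Real.sqrt d.minFac * Real.sqrt e := by
      rw [show ((d:ℕ):ℝ) = ((d.minFac : ℕ):ℝ) * (e:ℝ) by
        rw [← Nat.cast_mul, ← he]]
      exact Real.sqrt_mul (by positivity) _
    rw [hsqrt]
    apply Subfield.mul_mem
    · exact sqrt_mem (hfac _ hp (Nat.minFac_dvd d))
    · exact IH e hel P (fun q hq hqe => hfac q hq (he ▸ hqe.mul_left _))

/-- Linear independence of square roots of squarefree integers -/
lemma ind : ∀ (N : ℕ) (S : Finset ℕ) (c : ℕ → ℤ) (r : ℤ), (∑ d ∈ S, d) ≤ N →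
    (∀ d ∈ S, Squarefree d) →
    (∑ d ∈ S, (c d : ℝ) * Real.sqrt d) = (r : ℝ) →
    ∀ d₀ ∈ S, 1 < d₀ → c d₀ = 0 := by
  intro N
  induction N using Nat.strong_induction_on with
  | _ N IH =>
  intro S c r hN hsf heq d₀ hd₀S hd₀
  set p := d₀.minFac with hp
  have hpp : p.Prime := Nat.minFac_prime (by omega)
  set Sp := S.filter (fun d => p ∣ d) with hSp
  set S0 := S.filter (fun d => ¬ p ∣ d) with hS0
  set P : Finset ℕ := (S.biUnion Nat.primeFactors).erase p with hPdef
  have hPprime : ∀ q ∈ P, q.Prime := by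
    intro q hq
    obtain ⟨d, _, hqd⟩ := Finset.mem_biUnion.1 (Finset.mem_of_mem_erase hq)
    exact Nat.prime_of_mem_primeFactors hqd
  have hmem0 : ∀ d ∈ S0, Real.sqrt d ∈ K P := by
    intro d hd
    obtain ⟨hdS, hpd⟩ := Finset.mem_filter.1 hd
    apply sqrtd_mem
    intro q hq hqd
    have hd0 : d ≠ 0 := (hsf d hdS).ne_zero
    refine Finset.mem_erase.2 ⟨?_, Finset.mem_biUnion.2 ⟨d, hdS, Nat.mem_primeFactors.2 ⟨hq, hqd, hd0⟩⟩⟩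
    rintro rfl; exact hpd hqd
  have hmemp : ∀ d ∈ Sp, Real.sqrt (d/p : ℕ) ∈ K P := by
    intro d hd
    obtain ⟨hdS, hpd⟩ := Finset.mem_filter.1 hd
    have hd0 : d ≠ 0 := (hsf d hdS).ne_zero
    apply sqrtd_mem
    intro q hq hqd
    have hqd' : q ∣ d := hqd.trans (Nat.div_dvd_of_dvd hpd)
    refine Finset.mem_erase.2 ⟨?_, Finset.mem_biUnion.2 ⟨d, hdS, Nat.mem_primeFactors.2 ⟨hq, hqd', hd0⟩⟩⟩
    rintro rfl
    -- p ∣ d/p contradicts squarefree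
    obtain ⟨f, hf⟩ := hqd
    have : p * p ∣ d := by
      obtain ⟨g, hg⟩ := hpd
      refine ⟨f, ?_⟩
      rw [hg] at hf ⊢
      rw [Nat.mul_div_cancel_left g hpp.pos] at hf
      rw [hf]; ring
    exact hpp.not_isUnit ((hsf d hdS) p this)
  have hsP : Real.sqrt p ∉ K P := by
    intro h
    have := L P.card P rfl hPprime p hpp.squarefree h p hpp (dvd_refl p)
    exact Finset.notMem_erase _ _ this
  -- split the sum
  have hsplit : ∀ d ∈ Sp, Real.sqrt d = Real.sqrt (d/p:ℕ) * Real.sqrt p := by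
    intro d hd
    obtain ⟨hdS, hpd⟩ := Finset.mem_filter.1 hd
    rw [show ((d:ℕ):ℝ) = ((d/p:ℕ):ℝ) * (p:ℝ) by
      rw [← Nat.cast_mul, Nat.div_mul_cancel hpd]]
    exact Real.sqrt_mul (by positivity) _
  set v : ℝ := ∑ d ∈ Sp, (c d : ℝ) * Real.sqrt (d/p:ℕ) with hv
  set u : ℝ := (∑ d ∈ S0, (c d : ℝ) * Real.sqrt d) - (r:ℝ) with hu
  have huv : u + v * Real.sqrt p = 0 := by
    have : (∑ d ∈ S0, (c d : ℝ) * Real.sqrt d) + ∑ d ∈ Sp, (c d : ℝ) * Real.sqrt d = (r:ℝ) := by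
      rw [← heq, hS0, hSp, add_comm]
      exact Finset.sum_filter_add_sum_filter_not S _ _
    rw [hu, hv, Finset.sum_mul]
    have h2 : ∑ d ∈ Sp, (c d:ℝ) * Real.sqrt d = ∑ d ∈ Sp, (c d : ℝ) * Real.sqrt (d/p:ℕ) * Real.sqrt p := by
      apply Finset.sum_congr rfl
      intro d hd
      rw [hsplit d hd]; ring
    rw [h2] at this
    linarith [this]
  have hvmem : v ∈ K P := by
    apply Subfield.sum_mem
    intro d hd
    exact Subfield.mul_mem _ (intCast_mem _ _) (hmemp d hd)
  have humem : u ∈ K P := by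
    apply Subfield.sub_mem
    · exact Subfield.sum_mem _ (fun d hd => Subfield.mul_mem _ (intCast_mem _ _) (hmem0 d hd))
    · exact intCast_mem _ _
  have hv0 : v = 0 := by
    by_contra hv0
    apply hsP
    have : Real.sqrt p = -u / v := by field_simp; linarith [huv]
    rw [this]
    exact Subfield.div_mem _ (Subfield.neg_mem _ humem) hvmem
  -- now recurse on the relation v = 0
  set S' := Sp.image (fun d => d / p) with hS'
  set c' : ℕ → ℤ := fun e => c (p * e) with hc'
  have hinj : ∀ x ∈ Sp, ∀ y ∈ Sp, x / p = y / p → x = y := by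
    intro x hx y hy hxy
    obtain ⟨_, hpx⟩ := Finset.mem_filter.1 hx
    obtain ⟨_, hpy⟩ := Finset.mem_filter.1 hy
    rw [← Nat.div_mul_cancel hpx, ← Nat.div_mul_cancel hpy, hxy]
  have hrw : ∀ d ∈ Sp, p * (d / p) = d := by
    intro d hd
    exact Nat.mul_div_cancel' (Finset.mem_filter.1 hd).2
  have hsum' : (∑ e ∈ S', (c' e : ℝ) * Real.sqrt e) = ((0:ℤ):ℝ) := by
    rw [Finset.sum_image hinj]
    push_cast
    rw [← hv0, hv]
    apply Finset.sum_congr rfl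
    intro d hd
    rw [hc']
    simp only [hrw d hd]
  have hS'sf : ∀ e ∈ S', Squarefree e := by
    intro e he
    obtain ⟨d, hd, rfl⟩ := Finset.mem_image.1 he
    exact (hsf d (Finset.mem_filter.1 hd).1).squarefree_of_dvd (Nat.div_dvd_of_dvd (Finset.mem_filter.1 hd).2)
  have hd₀Sp : d₀ ∈ Sp := Finset.mem_filter.2 ⟨hd₀S, Nat.minFac_dvd d₀⟩
  have hsum'le : (∑ e ∈ S', e) < N := by
    have h1 : (∑ e ∈ S', e) = ∑ d ∈ Sp, d / p := Finset.sum_image hinj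
    have h2 : (∑ d ∈ Sp, d / p) < ∑ d ∈ Sp, d := by
      apply Finset.sum_lt_sum (fun d _ => Nat.div_le_self d p)
      refine ⟨d₀, hd₀Sp, ?_⟩
      exact Nat.div_lt_self (by omega) hpp.one_lt
    have h3 : (∑ d ∈ Sp, d) ≤ ∑ d ∈ S, d :=
      Finset.sum_le_sum_of_subset (Finset.filter_subset _ _)
    omega
  have hmain : ∀ e ∈ S', 1 < e → c' e = 0 := by
    intro e he h1e
    exact IH (∑ e ∈ S', e) hsum'le S' c' 0 (le_refl _) hS'sf hsum' e he h1e
  -- conclude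
  have hd₀' : d₀ / p ∈ S' := Finset.mem_image.2 ⟨d₀, hd₀Sp, rfl⟩
  rcases eq_or_ne (d₀ / p) 1 with h1 | h1
  · -- c' 1 = 0 from the sum
    have hall : ∀ e ∈ S', e ≠ 1 → (c' e : ℝ) * Real.sqrt e = 0 := by
      intro e he hne
      have he1 : 1 < e := by
        have := (hS'sf e he).ne_zero; omega
      rw [hmain e he he1]; simp
    have hone := Finset.sum_eq_single_of_mem (1:ℕ) (h1 ▸ hd₀') hall
    rw [hsum'] at hone
    simp at hone
    have hd₀p : d₀ = p * 1 := by rw [← hrw d₀ hd₀Sp, h1]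
    have hcd : c d₀ = c' 1 := by simp only [hc']; rw [← hd₀p]
    rw [hcd]
    exact_mod_cast hone.symm
  · have h1e : 1 < d₀ / p := by
      have h0 : d₀ / p ≠ 0 := (hS'sf _ hd₀').ne_zero
      exact lt_of_le_of_ne (Nat.pos_of_ne_zero h0) (Ne.symm h1)
    have hfin := hmain _ hd₀' h1e
    simp only [hc'] at hfin
    rwa [hrw d₀ hd₀Sp] at hfin



lemma sqrt_nat_isIntegral (n : ℕ) : IsIntegral ℤ (Real.sqrt n) := by
  refine ⟨Polynomial.X^2 - Polynomial.C (n:ℤ), Polynomial.monic_X_pow_sub_C _ two_ne_zero, ?_⟩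
  simp [Polynomial.eval₂_sub, Real.sq_sqrt (show (0:ℝ) ≤ (n:ℝ) by positivity)]

lemma int_of_rat_isIntegral {x : ℝ} (hx : IsIntegral ℤ x) {r : ℚ} (hr : (r:ℝ) = x) :
    ∃ k : ℤ, (k:ℝ) = x := by
  have h1 : IsIntegral ℤ r := by
    rw [← isIntegral_algebraMap_iff (algebraMap ℚ ℝ).injective]
    have : algebraMap ℚ ℝ r = x := by rw [← hr]; rfl
    rw [this]; exact hx
  obtain ⟨k, hk⟩ := IsIntegrallyClosed.isIntegral_iff.mp h1
  refine ⟨k, ?_⟩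
  rw [← hr, ← hk]
  push_cast; rfl



lemma key (q : ℕ) (a : Fin q → ℕ) (W : ℕ) (ha : ∀ i, (a i)^2 < W)
    (ε : Fin q → Bool) (m : ℤ)
    (heq : (m:ℝ) = ∑ i : Fin q, (if ε i then (1:ℝ) else -1) * Real.sqrt (a i) * (W:ℝ)^(i:ℕ)) :
    ∀ i, IsSquare (a i) := by
  intro i₀
  by_contra hns
  choose s t h1 h2 using fun i => Nat.sq_mul_squarefree (a i)
  have hsqrt : ∀ i, Real.sqrt (a i) = (t i) * Real.sqrt (s i) := by
    intro i
    rw [← h1 i]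
    push_cast
    rw [Real.sqrt_mul (by positivity), Real.sqrt_sq (by positivity)]
  have ht0 : t i₀ ≠ 0 := by
    intro h
    exact hns ⟨0, by rw [← h1 i₀, h]; ring⟩
  have hs1 : 1 < s i₀ := by
    rcases Nat.lt_or_ge (s i₀) 2 with h | h
    · exfalso
      have := (h2 i₀).ne_zero
      have hseq : s i₀ = 1 := by omega
      exact hns ⟨t i₀, by rw [← h1 i₀, hseq]; ring⟩
    · omega
  set T : Finset (Fin q) := univ.filter (fun i => t i ≠ 0) with hT
  set S : Finset ℕ := T.image s with hS
  set c : ℕ → ℤ := fun d => ∑ i ∈ T.filter (fun i => s i = d),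
    (if ε i then (1:ℤ) else -1) * (t i) * (W:ℤ)^(i:ℕ) with hc
  have hm : (∑ d ∈ S, (c d : ℝ) * Real.sqrt d) = (m:ℝ) := by
    rw [heq]
    have hfib := Finset.sum_fiberwise_of_maps_to (g := s) (t := S)
      (fun i hi => Finset.mem_image_of_mem s hi)
      (fun i => (if ε i then (1:ℝ) else -1) * Real.sqrt (a i) * (W:ℝ)^(i:ℕ))
    have hTsum : ∑ i ∈ T, (if ε i then (1:ℝ) else -1) * Real.sqrt (a i) * (W:ℝ)^(i:ℕ)
        = ∑ i : Fin q, (if ε i then (1:ℝ) else -1) * Real.sqrt (a i) * (W:ℝ)^(i:ℕ) := by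
      apply Finset.sum_subset (Finset.filter_subset _ _)
      intro i _ hiT
      have : t i = 0 := by
        by_contra h
        exact hiT (Finset.mem_filter.2 ⟨Finset.mem_univ i, h⟩)
      rw [hsqrt i, this]
      push_cast; ring
    rw [← hTsum, ← hfib]
    apply Finset.sum_congr rfl
    intro d hd
    rw [hc]
    push_cast
    rw [Finset.sum_mul]
    apply Finset.sum_congr rfl
    intro i hi
    obtain ⟨hiT, hsd⟩ := Finset.mem_filter.1 hi
    rw [hsqrt i, hsd]
    ring
  have hSsf : ∀ d ∈ S, Squarefree d := by
    intro d hd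
    obtain ⟨i, _, rfl⟩ := Finset.mem_image.1 hd
    exact h2 i
  have hi₀T : i₀ ∈ T := Finset.mem_filter.2 ⟨Finset.mem_univ _, ht0⟩
  have hd₀S : s i₀ ∈ S := Finset.mem_image_of_mem s hi₀T
  have hczero : c (s i₀) = 0 :=
    ind (∑ d ∈ S, d) S c m (le_refl _) hSsf hm (s i₀) hd₀S hs1
  -- now derive contradiction: the coefficient is nonzero
  set G : Finset (Fin q) := T.filter (fun i => s i = s i₀) with hG
  have hi₀G : i₀ ∈ G := Finset.mem_filter.2 ⟨hi₀T, rfl⟩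
  have hGne : G.Nonempty := ⟨i₀, hi₀G⟩
  set j := G.max' hGne with hj
  have hjG : j ∈ G := G.max'_mem hGne
  have hW1 : 1 ≤ W := lt_of_le_of_lt (Nat.zero_le _) (ha i₀)
  have htle : ∀ i ∈ G, (t i : ℤ) ≤ (W:ℤ) - 1 := by
    intro i hi
    obtain ⟨hiT, _⟩ := Finset.mem_filter.1 hi
    have hti : t i ≠ 0 := (Finset.mem_filter.1 hiT).2
    have hti' : 0 < t i := Nat.pos_of_ne_zero hti
    have hsi' : 0 < s i := Nat.pos_of_ne_zero (h2 i).ne_zero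
    have hai : 1 ≤ a i := by
      rw [← h1 i]
      exact Nat.one_le_iff_ne_zero.2 (Nat.mul_ne_zero (pow_ne_zero _ hti) (h2 i).ne_zero)
    have h3 : t i ≤ a i := by
      calc t i ≤ (t i)^2 * (s i) := by nlinarith
        _ = a i := h1 i
    have h5 : a i ≤ a i ^ 2 := Nat.le_self_pow two_ne_zero _
    have h6 := ha i
    omega
  have habs : ∀ i ∈ G.erase j, (i:ℕ) < (j:ℕ) := by
    intro i hi
    have hne : i ≠ j := (Finset.mem_erase.1 hi).1
    have : i ≤ j := G.le_max' i (Finset.mem_of_mem_erase hi)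
    exact lt_of_le_of_ne this (fun h => hne (Fin.ext h))
  have hbound : |∑ i ∈ G.erase j, (if ε i then (1:ℤ) else -1) * (t i) * (W:ℤ)^(i:ℕ)|
      ≤ (W:ℤ)^(j:ℕ) - 1 := by
    calc |∑ i ∈ G.erase j, (if ε i then (1:ℤ) else -1) * (t i) * (W:ℤ)^(i:ℕ)|
        ≤ ∑ i ∈ G.erase j, |(if ε i then (1:ℤ) else -1) * (t i) * (W:ℤ)^(i:ℕ)| :=
          Finset.abs_sum_le_sum_abs _ _
      _ ≤ ∑ i ∈ G.erase j, ((W:ℤ) - 1) * (W:ℤ)^(i:ℕ) := by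
          apply Finset.sum_le_sum
          intro i hi
          rw [abs_mul, abs_mul]
          have h5 : |(if ε i then (1:ℤ) else -1)| = 1 := by split <;> simp
          rw [h5, one_mul, abs_of_nonneg (by positivity : (0:ℤ) ≤ (t i:ℤ)),
            abs_of_nonneg (by positivity : (0:ℤ) ≤ (W:ℤ)^(i:ℕ))]
          exact mul_le_mul_of_nonneg_right (htle i (Finset.mem_of_mem_erase hi)) (by positivity)
      _ = ∑ k ∈ (G.erase j).image (fun i : Fin q => (i:ℕ)), ((W:ℤ) - 1) * (W:ℤ)^k := by
          rw [Finset.sum_image (fun x _ y _ h => Fin.ext h)]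
      _ ≤ ∑ k ∈ Finset.range (j:ℕ), ((W:ℤ) - 1) * (W:ℤ)^k := by
          apply Finset.sum_le_sum_of_subset_of_nonneg
          · intro k hk
            obtain ⟨i, hi, rfl⟩ := Finset.mem_image.1 hk
            exact Finset.mem_range.2 (habs i hi)
          · intro k _ _
            have h8 : (1:ℤ) ≤ (W:ℤ) := by exact_mod_cast hW1
            have h9 : (0:ℤ) ≤ (W:ℤ)^k := by positivity
            nlinarith
      _ = (W:ℤ)^(j:ℕ) - 1 := by
          rw [← Finset.mul_sum]
          rw [mul_comm]
          exact geom_sum_mul (W:ℤ) (j:ℕ)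
  have hcsum : c (s i₀) = (if ε j then (1:ℤ) else -1) * (t j) * (W:ℤ)^(j:ℕ)
      + ∑ i ∈ G.erase j, (if ε i then (1:ℤ) else -1) * (t i) * (W:ℤ)^(i:ℕ) := by
    rw [hc]
    exact (Finset.add_sum_erase G _ hjG).symm
  have htj1 : (1:ℤ) ≤ (t j : ℤ) := by
    have := (Finset.mem_filter.1 ((Finset.mem_filter.1 hjG).1)).2
    exact_mod_cast Nat.pos_of_ne_zero this
  have hWj : (1:ℤ) ≤ (W:ℤ)^(j:ℕ) := by
    have hWpos : (0:ℤ) < (W:ℤ) := by exact_mod_cast hW1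
    have := pow_pos hWpos (j:ℕ)
    omega
  rw [hczero] at hcsum
  have h6 : |(if ε j then (1:ℤ) else -1) * (t j) * (W:ℤ)^(j:ℕ)| ≥ (W:ℤ)^(j:ℕ) := by
    rw [abs_mul, abs_mul]
    have h5 : |(if ε j then (1:ℤ) else -1)| = 1 := by split <;> simp
    rw [h5, one_mul, abs_of_nonneg (by positivity : (0:ℤ) ≤ (t j:ℤ)),
      abs_of_nonneg (by positivity : (0:ℤ) ≤ (W:ℤ)^(j:ℕ))]
    nlinarith
  have h7 : (if ε j then (1:ℤ) else -1) * (t j) * (W:ℤ)^(j:ℕ)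
      = - ∑ i ∈ G.erase j, (if ε i then (1:ℤ) else -1) * (t i) * (W:ℤ)^(i:ℕ) := by
    linarith [hcsum]
  rw [h7, abs_neg] at h6
  linarith [hbound, h6, hWj]



end MRaux
end

open MRaux in
/-- **Relation-combining theorem (Matiyasevich–Robinson).** For `q ≥ 1`,
nonnegative integers `A₁, …, A_q`, and integers `B ≠ 0`, `C`, `D`, with
`W = 1 + Σ Aᵢ²`: the conditions "every `Aᵢ` is a perfect square", `B ∣ C`, and
`D > 0` all hold iff the `2^q`-fold product over all sign choices
`∏_ε (B²n + C² − B²(2D−1)(C² + W^q + Σᵢ εᵢ √(Aᵢ) W^{i−1}))` vanishes for some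
natural number `n`. -/
theorem relation_combining (q : ℕ) (hq : 1 ≤ q) (A : Fin q → ℤ) (hA : ∀ i, 0 ≤ A i)
    (B C D : ℤ) (hB : B ≠ 0) :
    ((∀ i, ∃ a : ℤ, A i = a ^ 2) ∧ B ∣ C ∧ 0 < D) ↔
      ∃ n : ℕ,
        (∏ ε : Fin q → Bool,
          ((B : ℝ) ^ 2 * (n : ℝ) + (C : ℝ) ^ 2 -
            (B : ℝ) ^ 2 * (2 * (D : ℝ) - 1) *
              ((C : ℝ) ^ 2 + ((1 + ∑ i, A i ^ 2 : ℤ) : ℝ) ^ q +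
                ∑ i : Fin q, (if ε i then (1 : ℝ) else -1) * Real.sqrt ((A i : ℝ)) *
                  ((1 + ∑ j, A j ^ 2 : ℤ) : ℝ) ^ (i : ℕ)))) = 0 := by
  set WZ : ℤ := 1 + ∑ i, A i ^ 2 with hWZ
  have hW1 : 1 ≤ WZ := by
    have : (0:ℤ) ≤ ∑ i, A i ^ 2 := Finset.sum_nonneg (fun i _ => sq_nonneg _)
    omega
  have hB2 : (0:ℤ) < B^2 := lt_of_le_of_ne (sq_nonneg B) (Ne.symm (pow_ne_zero _ hB))
  have hWq : (1:ℤ) ≤ WZ^q := one_le_pow₀ hW1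
  constructor
  · rintro ⟨hsq, ⟨c, rfl⟩, hD⟩
    choose a ha2 using hsq
    set S : ℤ := ∑ i, |a i| * WZ^(i:ℕ) with hS
    have hS0 : 0 ≤ S := Finset.sum_nonneg (fun i _ => by positivity)
    set n0 : ℤ := (2*D-1)*((B*c)^2 + WZ^q + S) - c^2 with hn0
    have hn0pos : 0 ≤ n0 := by
      have h1 : (1:ℤ) ≤ 2*D - 1 := by omega
      have h2 : c^2 ≤ (B*c)^2 := by
        have : (1:ℤ) ≤ B^2 := hB2
        calc c^2 = 1 * c^2 := by ring
          _ ≤ B^2 * c^2 := by nlinarith [sq_nonneg c]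
          _ = (B*c)^2 := by ring
      nlinarith [sq_nonneg (B*c)]
    refine ⟨n0.toNat, ?_⟩
    apply Finset.prod_eq_zero (Finset.mem_univ (fun _ => true))
    have hsum : (∑ i : Fin q, (if (fun _ => true) i then (1 : ℝ) else -1) * Real.sqrt ((A i : ℝ)) *
        ((WZ : ℤ) : ℝ) ^ (i : ℕ)) = (S : ℝ) := by
      rw [hS]
      push_cast
      apply Finset.sum_congr rfl
      intro i _
      rw [if_pos rfl, ha2 i]
      push_cast
      rw [Real.sqrt_sq_eq_abs]
      ring
    rw [hsum]
    have hn : ((n0.toNat : ℕ) : ℝ) = ((n0:ℤ):ℝ) := by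
      exact_mod_cast congrArg (fun z : ℤ => (z:ℝ)) (Int.toNat_of_nonneg hn0pos)
    rw [hn]
    have hz : (B^2 * n0 + (B*c)^2 - B^2*(2*D-1)*((B*c)^2 + WZ^q + S) : ℤ) = 0 := by
      rw [hn0]; ring
    exact_mod_cast hz
  · rintro ⟨n, hn⟩
    obtain ⟨ε, -, hfac⟩ := Finset.prod_eq_zero_iff.1 hn
    set α : ℝ := ∑ i : Fin q, (if ε i then (1 : ℝ) else -1) * Real.sqrt ((A i : ℝ)) *
        ((WZ : ℤ) : ℝ) ^ (i : ℕ) with hα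
    have hβ : ((B^2 * (2*D-1) : ℤ) : ℝ) ≠ 0 := by
      have h1 : (2*D - 1 : ℤ) ≠ 0 := by omega
      have : (B^2 * (2*D-1) : ℤ) ≠ 0 := mul_ne_zero (pow_ne_zero _ hB) h1
      exact_mod_cast this
    -- α is rational
    set rα : ℚ := ((B^2*(n:ℤ) + C^2 : ℤ) : ℚ) / ((B^2*(2*D-1) : ℤ) : ℚ) - ((C^2 + WZ^q : ℤ) : ℚ) with hrα
    have hrat : (rα : ℝ) = α := by
      have hβQ : ((B^2 * (2*D-1) : ℤ) : ℚ) ≠ 0 := by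
        have h1 : (2*D - 1 : ℤ) ≠ 0 := by omega
        have : (B^2 * (2*D-1) : ℤ) ≠ 0 := mul_ne_zero (pow_ne_zero _ hB) h1
        exact_mod_cast this
      rw [hrα]
      push_cast
      push_cast at hβ
      have h2D : (2*(D:ℝ) - 1) ≠ 0 := right_ne_zero_of_mul hβ
      field_simp
      push_cast at hfac
      nlinarith [hfac]
    -- α is an algebraic integer
    have hint : IsIntegral ℤ α := by
      have : α ∈ integralClosure ℤ ℝ := by
        apply Subalgebra.sum_mem
        intro i _
        apply Subalgebra.mul_mem
        · apply Subalgebra.mul_mem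
          · split
            · exact Subalgebra.one_mem _
            · exact Subalgebra.neg_mem _ (Subalgebra.one_mem _)
          · have : ((A i : ℤ):ℝ) = (((A i).toNat : ℕ) : ℝ) := by
              exact_mod_cast (congrArg (fun z : ℤ => (z:ℝ)) (Int.toNat_of_nonneg (hA i))).symm
            rw [this]
            exact sqrt_nat_isIntegral _
        · apply Subalgebra.pow_mem
          have : ((WZ:ℤ):ℝ) = algebraMap ℤ ℝ WZ := rfl
          rw [this]
          exact Subalgebra.algebraMap_mem _ _
      exact this
    obtain ⟨m, hm⟩ := int_of_rat_isIntegral hint hrat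
    -- key integer identity
    have hZ : B^2*(n:ℤ) + C^2 = B^2*(2*D-1)*(C^2 + WZ^q + m) := by
      have : (B:ℝ)^2 * (n:ℝ) + (C:ℝ)^2 = (B:ℝ)^2*(2*(D:ℝ)-1)*((C:ℝ)^2 + ((WZ:ℤ):ℝ)^q + (m:ℝ)) := by
        rw [hm]
        nlinarith [hfac]
      exact_mod_cast this
    -- lower bound on α
    have hbound : -( ((WZ:ℤ):ℝ)^q - 1) ≤ α := by
      have hterm : ∀ i : Fin q, -( (((WZ:ℤ):ℝ) - 1) * ((WZ:ℤ):ℝ)^(i:ℕ))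
          ≤ (if ε i then (1 : ℝ) else -1) * Real.sqrt ((A i : ℝ)) * ((WZ : ℤ) : ℝ) ^ (i : ℕ) := by
        intro i
        have h1 : Real.sqrt ((A i : ℝ)) ≤ ((WZ:ℤ):ℝ) - 1 := by
          have hAle : (A i : ℝ) ≤ ((WZ:ℤ):ℝ) - 1 := by
            have h2 : A i ≤ WZ - 1 := by
              have h3 : A i ≤ A i ^ 2 := by nlinarith [hA i]
              have h4 : A i ^2 ≤ ∑ j, A j ^2 :=
                Finset.single_le_sum (fun j _ => sq_nonneg (A j)) (Finset.mem_univ i)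
              omega
            have h5 : (A i : ℝ) ≤ ((WZ - 1 : ℤ) : ℝ) := by exact_mod_cast h2
            push_cast at h5
            linarith
          calc Real.sqrt ((A i:ℝ)) ≤ Real.sqrt (((WZ:ℤ):ℝ) - 1) := Real.sqrt_le_sqrt hAle
            _ ≤ ((WZ:ℤ):ℝ) - 1 := by
              rcases eq_or_lt_of_le (show (1:ℤ) ≤ WZ from hW1) with h | h
              · rw [show ((WZ:ℤ):ℝ) - 1 = 0 by rw [← h]; push_cast; ring]
                simp
              · have hV1 : (1:ℝ) ≤ ((WZ:ℤ):ℝ) - 1 := by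
                  have : (2:ℤ) ≤ WZ := h
                  have : (2:ℝ) ≤ ((WZ:ℤ):ℝ) := by exact_mod_cast this
                  linarith
                calc Real.sqrt (((WZ:ℤ):ℝ) - 1) ≤ Real.sqrt ((((WZ:ℤ):ℝ) - 1)^2) :=
                      Real.sqrt_le_sqrt (by nlinarith)
                  _ = ((WZ:ℤ):ℝ) - 1 := Real.sqrt_sq (by linarith)
        have hsq0 : 0 ≤ Real.sqrt ((A i:ℝ)) := Real.sqrt_nonneg _
        have hWp : (0:ℝ) ≤ ((WZ:ℤ):ℝ)^(i:ℕ) := by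
          have : (0:ℝ) ≤ ((WZ:ℤ):ℝ) := by exact_mod_cast le_trans zero_le_one hW1
          positivity
        split
        · nlinarith
        · nlinarith
      have hgeom : ∑ i : Fin q, ((((WZ:ℤ):ℝ) - 1) * ((WZ:ℤ):ℝ)^(i:ℕ)) = ((WZ:ℤ):ℝ)^q - 1 := by
        rw [← Finset.mul_sum]
        rw [Fin.sum_univ_eq_sum_range (fun k => ((WZ:ℤ):ℝ)^k)]
        rw [mul_comm]
        exact geom_sum_mul _ _
      calc -(((WZ:ℤ):ℝ)^q - 1) = ∑ i : Fin q, -((((WZ:ℤ):ℝ) - 1) * ((WZ:ℤ):ℝ)^(i:ℕ)) := by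
            rw [Finset.sum_neg_distrib, hgeom]
        _ ≤ α := Finset.sum_le_sum (fun i _ => hterm i)
    have hXpos : (0:ℤ) < C^2 + WZ^q + m := by
      have : (0:ℝ) < (C:ℝ)^2 + ((WZ:ℤ):ℝ)^q + (m:ℝ) := by
        rw [hm]
        linarith [sq_nonneg (C:ℝ), hbound]
      exact_mod_cast this
    have hD1 : (0:ℤ) < 2*D - 1 := by
      rcases lt_trichotomy (2*D-1 : ℤ) 0 with h | h | h
      · exfalso
        have hL : (0:ℤ) ≤ B^2*(n:ℤ) + C^2 := by positivity
        rw [hZ] at hL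
        have h1 : (0:ℤ) < B^2*(C^2+WZ^q+m) := mul_pos hB2 hXpos
        have h2 : B^2*(2*D-1)*(C^2+WZ^q+m) = (2*D-1)*(B^2*(C^2+WZ^q+m)) := by ring
        rw [h2] at hL
        have h3 := mul_neg_of_neg_of_pos h h1
        linarith
      · exfalso; omega
      · exact h
    refine ⟨?_, ?_, by omega⟩
    · -- squares
      intro i
      have hcastW : ((WZ.toNat : ℕ) : ℝ) = ((WZ:ℤ):ℝ) := by
        exact_mod_cast congrArg (fun z : ℤ => (z:ℝ)) (Int.toNat_of_nonneg (le_trans zero_le_one hW1))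
      have hcastA : ∀ j : Fin q, (((A j).toNat : ℕ) : ℝ) = ((A j : ℤ):ℝ) := fun j => by
        exact_mod_cast congrArg (fun z : ℤ => (z:ℝ)) (Int.toNat_of_nonneg (hA j))
      have hsqr := key q (fun i => (A i).toNat) WZ.toNat (fun i => by
          have h3 : A i ^ 2 < WZ := by
            have h4 : A i ^2 ≤ ∑ j, A j ^2 :=
              Finset.single_le_sum (fun j _ => sq_nonneg (A j)) (Finset.mem_univ i)
            omega
          have h5 : (((A i).toNat : ℤ))^2 < ((WZ.toNat : ℤ)) := by
            rw [Int.toNat_of_nonneg (hA i), Int.toNat_of_nonneg (le_trans zero_le_one hW1)]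
            exact h3
          exact_mod_cast h5) ε m (by
        rw [hm, hα]
        apply Finset.sum_congr rfl
        intro j _
        rw [hcastA j, hcastW]) i
      obtain ⟨k, hk⟩ := hsqr
      refine ⟨(k:ℤ), ?_⟩
      rw [← Int.toNat_of_nonneg (hA i), hk]
      push_cast; ring
    · -- B ∣ C
      have hdvd : B^2 ∣ C^2 := ⟨(2*D-1)*(C^2 + WZ^q + m) - (n:ℤ), by linarith [hZ]⟩
      exact (Int.pow_dvd_pow_iff two_ne_zero).1 hdvd
end

section
/- Let A, B, C be natural numbers with A > 1, B > 0, and C > 0. Then C = ψ_A(B) if and only if there exist natural numbers i and j such that, setting D = (A² − 1)·C² + 1, E = 2·(i + 1)·D·C², F = (A² − 1)·E² + 1, G = A + F·(F − A), H = B + 2·j·C, and I = (G² − 1)·H² + 1, the following hold: D·F·I is a perfect square, F divides H − C (as integers), and B ≤ C. -/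
namespace MR75
open Pell

variable {a : ℕ} (a1 : 1 < a)

theorem xz_cast (n : ℕ) : xz a1 n = (xn a1 n : ℤ) := rfl
theorem yz_cast (n : ℕ) : yz a1 n = (yn a1 n : ℤ) := rfl
theorem az_cast : az a = (a : ℤ) := rfl

theorem pell_z (n : ℕ) :
    (xn a1 n : ℤ) * xn a1 n - ((a : ℤ) * a - 1) * ((yn a1 n : ℤ) * yn a1 n) = 1 := by
  have h := pell_eqz a1 n
  rw [xz_cast, yz_cast, dz_val, az_cast] at h
  linear_combination h

theorem xx_eq (n : ℕ) :
    xn a1 n * xn a1 n = (a * a - 1) * (yn a1 n * yn a1 n) + 1 := by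
  have h1 : 1 ≤ a * a := by nlinarith
  have h := pell_z a1 n
  have h2 : ((xn a1 n * xn a1 n : ℕ) : ℤ)
      = (((a * a - 1) * (yn a1 n * yn a1 n) + 1 : ℕ) : ℤ) := by
    push_cast [Nat.cast_sub h1]
    linear_combination h
  exact_mod_cast h2

theorem eq_pell' {x y : ℕ} (h : x * x = (a * a - 1) * (y * y) + 1) :
    ∃ n, x = xn a1 n ∧ y = yn a1 n := by
  have h1 : 1 ≤ a * a := by nlinarith
  apply eq_pell a1
  apply Nat.sub_eq_of_eq_add
  have hz : (x : ℤ) * x = ((a : ℤ) * a - 1) * ((y : ℤ) * y) + 1 := by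
    have := congrArg (Nat.cast : ℕ → ℤ) h
    push_cast [Nat.cast_sub h1] at this
    linear_combination this
  zify
  rw [dz_val, az_cast]
  linear_combination hz

theorem xn_succ' (n : ℕ) :
    xn a1 (n + 1) = xn a1 n * a + (a * a - 1) * yn a1 n := by
  have h1 : 1 ≤ a * a := by nlinarith
  have h := xn_succ a1 n
  have hz := congrArg (Nat.cast : ℕ → ℤ) h
  push_cast at hz
  rw [dz_val, az_cast] at hz
  have h2 : ((xn a1 (n+1) : ℕ) : ℤ) = ((xn a1 n * a + (a * a - 1) * yn a1 n : ℕ) : ℤ) := by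
    push_cast [Nat.cast_sub h1]
    linear_combination hz
  exact_mod_cast h2

theorem xn_add' (m n : ℕ) :
    xn a1 (m + n) = xn a1 m * xn a1 n + (a * a - 1) * (yn a1 m * yn a1 n) := by
  have h1 : 1 ≤ a * a := by nlinarith
  have h := xn_add a1 m n
  have hz := congrArg (Nat.cast : ℕ → ℤ) h
  push_cast at hz
  rw [dz_val, az_cast] at hz
  have h2 : ((xn a1 (m+n) : ℕ) : ℤ)
      = ((xn a1 m * xn a1 n + (a * a - 1) * (yn a1 m * yn a1 n) : ℕ) : ℤ) := by
    push_cast [Nat.cast_sub h1]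
    linear_combination hz
  exact_mod_cast h2

theorem y_lt_x : ∀ n, yn a1 n < xn a1 n := by
  intro n
  induction n with
  | zero => simp
  | succ k ih =>
    have hd : a ≤ a * a - 1 := by nlinarith [Nat.sub_add_cancel (show 1 ≤ a*a by nlinarith)]
    rw [xn_succ', yn_succ]
    have hx := x_pos a1 k
    have h1 : a * yn a1 k ≤ (a * a - 1) * yn a1 k := Nat.mul_le_mul_right _ hd
    have h2 : 2 * xn a1 k ≤ xn a1 k * a := by nlinarith
    linarith [h1, h2, hx]

theorem a_mul_y_succ (k : ℕ) : a * yn a1 (k + 1) = xn a1 (k + 1) + yn a1 k := by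
  have hd : a * a - 1 + 1 = a * a := by
    have : 1 ≤ a * a := by nlinarith
    omega
  rw [xn_succ', yn_succ]
  calc a * (xn a1 k + yn a1 k * a)
      = xn a1 k * a + (a * a) * yn a1 k := by ring
    _ = xn a1 k * a + (a * a - 1 + 1) * yn a1 k := by rw [hd]
    _ = xn a1 k * a + (a * a - 1) * yn a1 k + yn a1 k := by ring


theorem xn_add_z (m n : ℕ) :
    (xn a1 (m + n) : ℤ) = (xn a1 m : ℤ) * xn a1 n + ((a:ℤ) * a - 1) * ((yn a1 m : ℤ) * yn a1 n) := by
  have h := xn_add a1 m n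
  have hz := congrArg (Nat.cast : ℕ → ℤ) h
  push_cast at hz
  rw [dz_val, az_cast] at hz
  linear_combination hz

theorem yn_add_z (m n : ℕ) :
    (yn a1 (m + n) : ℤ) = (xn a1 m : ℤ) * yn a1 n + (yn a1 m : ℤ) * xn a1 n := by
  have h := yn_add a1 m n
  exact_mod_cast congrArg (Nat.cast : ℕ → ℤ) h

theorem dvd_x2_add_one (m : ℕ) : (xn a1 m : ℤ) ∣ (xn a1 (2*m) : ℤ) + 1 := by
  have h : (2:ℕ)*m = m + m := by ring
  rw [h, xn_add_z]
  refine ⟨2 * xn a1 m, ?_⟩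
  linear_combination - pell_z a1 m

theorem dvd_y2 (m : ℕ) : (xn a1 m : ℤ) ∣ (yn a1 (2*m) : ℤ) := by
  have h : (2:ℕ)*m = m + m := by ring
  rw [h, yn_add_z]
  exact ⟨2 * yn a1 m, by ring⟩

theorem dvd_x4_sub_one (m : ℕ) : (xn a1 m : ℤ) ∣ (xn a1 (4*m) : ℤ) - 1 := by
  have h : (4:ℕ)*m = 2*m + 2*m := by ring
  rw [h, xn_add_z]
  obtain ⟨u, hu⟩ := dvd_x2_add_one a1 m
  obtain ⟨v, hv⟩ := dvd_y2 a1 m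
  refine ⟨u * ((xn a1 (2*m) : ℤ) - 1) + ((a:ℤ)*a-1) * v * (yn a1 (2*m) : ℤ), ?_⟩
  linear_combination ((xn a1 (2*m) : ℤ) - 1) * hu + ((a:ℤ)*a-1) * (yn a1 (2*m):ℤ) * hv

theorem dvd_y4 (m : ℕ) : (xn a1 m : ℤ) ∣ (yn a1 (4*m) : ℤ) := by
  have h : (4:ℕ)*m = 2*m + 2*m := by ring
  rw [h, yn_add_z]
  obtain ⟨v, hv⟩ := dvd_y2 a1 m
  exact ⟨xn a1 (2*m) * v + v * xn a1 (2*m), by linear_combination ((xn a1 (2*m):ℤ) + xn a1 (2*m)) * hv⟩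

theorem y_period (m : ℕ) : ∀ q j,
    ((xn a1 m : ℤ) ∣ (yn a1 (j + 4*m*q) : ℤ) - yn a1 j) ∧
    ((xn a1 m : ℤ) ∣ (xn a1 (j + 4*m*q) : ℤ) - xn a1 j) := by
  intro q
  induction q with
  | zero => intro j; simp
  | succ q IH =>
    intro j
    obtain ⟨hy, hx⟩ := IH j
    have hstep : j + 4*m*(q+1) = (j + 4*m*q) + 4*m := by ring
    set t := j + 4*m*q with ht
    obtain ⟨u, hu⟩ := dvd_x4_sub_one a1 m
    obtain ⟨v, hv⟩ := dvd_y4 a1 m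
    constructor
    · have h1 : (yn a1 (t + 4*m) : ℤ) - yn a1 t
          = (xn a1 t : ℤ) * yn a1 (4*m) + (yn a1 t : ℤ) * ((xn a1 (4*m) : ℤ) - 1) := by
        rw [yn_add_z]; ring
      have h2 : (xn a1 m : ℤ) ∣ (yn a1 (t + 4*m) : ℤ) - yn a1 t := by
        rw [h1]
        exact dvd_add (Dvd.dvd.mul_left (dvd_y4 a1 m) _) (Dvd.dvd.mul_left (dvd_x4_sub_one a1 m) _)
      rw [hstep]
      have := dvd_add h2 hy
      simpa using this
    · have h1 : (xn a1 (t + 4*m) : ℤ) - xn a1 t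
          = (xn a1 t : ℤ) * ((xn a1 (4*m) : ℤ) - 1) + ((a:ℤ)*a-1) * ((yn a1 t : ℤ) * yn a1 (4*m)) := by
        rw [xn_add_z]; ring
      have h2 : (xn a1 m : ℤ) ∣ (xn a1 (t + 4*m) : ℤ) - xn a1 t := by
        rw [h1]
        exact dvd_add (Dvd.dvd.mul_left (dvd_x4_sub_one a1 m) _)
          ((Dvd.dvd.mul_left (dvd_y4 a1 m) _).mul_left _)
      rw [hstep]
      have := dvd_add h2 hx
      simpa using this

theorem y_reflect {m j : ℕ} (h : j ≤ 2*m) :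
    (xn a1 m : ℤ) ∣ (yn a1 (2*m - j) : ℤ) - yn a1 j := by
  have h2 := yz_sub a1 h
  rw [xz_cast, xz_cast, yz_cast, yz_cast, yz_cast] at h2
  obtain ⟨u, hu⟩ := dvd_x2_add_one a1 m
  obtain ⟨v, hv⟩ := dvd_y2 a1 m
  refine ⟨(xn a1 j : ℤ) * v - u * yn a1 j, ?_⟩
  linear_combination h2 + (xn a1 j : ℤ) * hv - (yn a1 j : ℤ) * hu

theorem y_antiperiod (m j : ℕ) :
    (xn a1 m : ℤ) ∣ (yn a1 (2*m + j) : ℤ) + yn a1 j := by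
  rw [yn_add_z]
  obtain ⟨u, hu⟩ := dvd_x2_add_one a1 m
  obtain ⟨v, hv⟩ := dvd_y2 a1 m
  refine ⟨u * yn a1 j + v * xn a1 j, ?_⟩
  linear_combination (yn a1 j : ℤ) * hu + (xn a1 j : ℤ) * hv


theorem y_inj_of_le {m i j : ℕ} (hi : i ≤ m) (hj : j ≤ m)
    (h : (xn a1 m : ℤ) ∣ (yn a1 i : ℤ) - yn a1 j) : i = j := by
  have h1 : yn a1 i < xn a1 m :=
    lt_of_le_of_lt ((strictMono_y a1).monotone hi) (y_lt_x a1 m)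
  have h2 : yn a1 j < xn a1 m :=
    lt_of_le_of_lt ((strictMono_y a1).monotone hj) (y_lt_x a1 m)
  have h3 : (yn a1 i : ℤ) - yn a1 j = 0 := by
    apply Int.eq_zero_of_abs_lt_dvd h
    rw [abs_lt]
    constructor <;> [skip; skip] <;>
    · push_cast
      omega
  have h4 : yn a1 i = yn a1 j := by omega
  exact (strictMono_y a1).injective h4

theorem y_add_y_zero {m i j : ℕ} (hm : 2 ≤ m) (hi : i ≤ m) (hj : j ≤ m)
    (h : (xn a1 m : ℤ) ∣ (yn a1 i : ℤ) + yn a1 j) : i = 0 ∧ j = 0 := by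
  by_contra hc
  have hy0 : ∀ k, 0 < k → 0 < yn a1 k := fun k hk => strictMono_y a1 hk
  have hsum_pos : 0 < yn a1 i + yn a1 j := by
    rcases Nat.eq_zero_or_pos i with hi0 | hi0
    · rcases Nat.eq_zero_or_pos j with hj0 | hj0
      · exact absurd ⟨hi0, hj0⟩ hc
      · have := hy0 j hj0; omega
    · have := hy0 i hi0; omega
  have hyi : yn a1 i ≤ yn a1 m := (strictMono_y a1).monotone hi
  have hyj : yn a1 j ≤ yn a1 m := (strictMono_y a1).monotone hj
  have hyx := y_lt_x a1 m
  have hdvd : xn a1 m ∣ yn a1 i + yn a1 j := by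
    have : ((yn a1 i + yn a1 j : ℕ) : ℤ) = (yn a1 i : ℤ) + yn a1 j := by push_cast; ring
    exact_mod_cast h
  obtain ⟨c, hcc⟩ := hdvd
  have hX := x_pos a1 m
  have hc1 : c = 1 := by
    rcases Nat.lt_or_ge c 1 with h' | h'
    · interval_cases c <;> omega
    · rcases Nat.lt_or_ge c 2 with h'' | h''
      · omega
      · exfalso
        have : 2 * xn a1 m ≤ xn a1 m * c := by nlinarith
        omega
  subst hc1
  rw [mul_one] at hcc
  -- yn i + yn j = xn m,  m = k+1
  obtain ⟨k, rfl⟩ : ∃ k, m = k + 1 := ⟨m - 1, by omega⟩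
  have hkey := a_mul_y_succ a1 k
  have hsum : yn a1 i + yn a1 j + yn a1 k = a * yn a1 (k + 1) := by omega
  have hyk1 : yn a1 (k+1) = xn a1 k + yn a1 k * a := yn_succ a1 k
  have hxk := x_pos a1 k
  have ha2 : 2 ≤ a := a1
  have hyk_pos : 0 < yn a1 k := hy0 k (by omega)
  -- helper handling the case where one index equals k+1
  have htop : ∀ t : ℕ, t ≤ k + 1 → yn a1 t + yn a1 (k+1) + yn a1 k ≠ a * yn a1 (k+1) := by
    intro t ht heq
    have hyt : yn a1 t ≤ yn a1 (k+1) := (strictMono_y a1).monotone ht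
    have hkk : yn a1 k < yn a1 (k+1) := strictMono_y a1 (by omega)
    rcases Nat.lt_or_ge a 3 with ha3 | ha3
    · -- a = 2
      have ha : a = 2 := by omega
      subst ha
      have hyt_eq : yn a1 t = xn a1 k + yn a1 k := by omega
      have h1 : yn a1 k < yn a1 t := by omega
      have h2 : yn a1 t < yn a1 (k+1) := by omega
      have h3 : k < t := (strictMono_y a1).lt_iff_lt.mp h1
      have h4 : t < k + 1 := (strictMono_y a1).lt_iff_lt.mp h2
      omega
    · -- a ≥ 3
      have e : 3 * yn a1 (k+1) ≤ a * yn a1 (k+1) :=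
        Nat.mul_le_mul_right _ ha3
      have hy1pos : 0 < yn a1 (k+1) := hy0 _ (by omega)
      linarith
  rcases Nat.lt_or_ge j (k+1) with hjk | hjk
  · rcases Nat.lt_or_ge i (k+1) with hik | hik
    · -- both ≤ k
      have h1 : yn a1 i ≤ yn a1 k := (strictMono_y a1).monotone (by omega)
      have h2 : yn a1 j ≤ yn a1 k := (strictMono_y a1).monotone (by omega)
      have hexp : a * yn a1 (k+1) = a * xn a1 k + a * a * yn a1 k := by
        rw [hyk1]; ring
      have e1 : 2 * xn a1 k ≤ a * xn a1 k := Nat.mul_le_mul_right _ ha2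
      have e2 : 4 * yn a1 k ≤ a * a * yn a1 k := Nat.mul_le_mul_right _ (by nlinarith)
      linarith
    · -- i = k+1
      have hieq : i = k + 1 := by omega
      subst hieq
      exact htop j (by omega) (by omega)
  · -- j = k+1
    have hjeq : j = k + 1 := by omega
    subst hjeq
    exact htop i (by omega) (by omega)

theorem y_modEq_cases {m r j : ℕ} (hm : 2 ≤ m) (hj0 : 0 < j) (hjm : j ≤ m)
    (h : (xn a1 m : ℤ) ∣ (yn a1 r : ℤ) - yn a1 j) :
    r ≡ j [MOD 2*m] ∨ 2*m ∣ r + j := by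
  have h4m : 0 < 4*m := by omega
  set Q := r / (4*m) with hQ
  set r' := r % (4*m) with hr'
  have hdecomp : r = r' + 4*m*Q := by
    rw [hr', hQ]; rw [Nat.mod_add_div]
  have hper := (y_period a1 m Q r').1
  rw [← hdecomp] at hper
  have h' : (xn a1 m : ℤ) ∣ (yn a1 r' : ℤ) - yn a1 j := by
    have hd := dvd_sub h hper
    have : (yn a1 r' : ℤ) - yn a1 j
        = ((yn a1 r : ℤ) - yn a1 j) - ((yn a1 r : ℤ) - yn a1 r') := by ring
    rw [this]
    exact hd
  have hrlt : r' < 4*m := Nat.mod_lt _ h4m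
  rcases Nat.lt_or_ge m r' with h1 | h1
  case inr =>
    -- r' ≤ m
    left
    have heq : r' = j := y_inj_of_le a1 h1 hjm h'
    have hr2 : r = j + 2*m*(2*Q) := by rw [hdecomp, heq]; ring
    show r % (2*m) = j % (2*m)
    rw [hr2, Nat.add_mul_mod_self_left]
  case inl =>
    rcases Nat.lt_or_ge (2*m) r' with h2 | h2
    · -- 2m < r' < 4m : antiperiod
      have ht : r' = 2*m + (r' - 2*m) := by omega
      set t := r' - 2*m with htdef
      have hanti := y_antiperiod a1 m t
      rw [← ht] at hanti
      have hsum : (xn a1 m : ℤ) ∣ (yn a1 t : ℤ) + yn a1 j := by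
        have hd := dvd_sub hanti h'
        have : (yn a1 t : ℤ) + yn a1 j
            = ((yn a1 r' : ℤ) + yn a1 t) - ((yn a1 r' : ℤ) - yn a1 j) := by ring
        rw [this]
        exact hd
      exfalso
      rcases Nat.lt_or_ge m t with h3 | h3
      · -- t > m, use reflection
        have ht2 : t ≤ 2*m := by omega
        have hrefl := y_reflect a1 ht2
        have hsum2 : (xn a1 m : ℤ) ∣ (yn a1 (2*m - t) : ℤ) + yn a1 j := by
          have hd := dvd_add hrefl hsum
          have : (yn a1 (2*m - t) : ℤ) + yn a1 j
              = ((yn a1 (2*m - t) : ℤ) - yn a1 t) + ((yn a1 t : ℤ) + yn a1 j) := by ring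
          rw [this]
          exact hd
        have := y_add_y_zero a1 hm (show 2*m - t ≤ m by omega) hjm hsum2
        omega
      · have := y_add_y_zero a1 hm h3 hjm hsum
        omega
    · -- m < r' ≤ 2m : reflection
      right
      have hrefl := y_reflect a1 (show 2*m - r' ≤ 2*m by omega)
      have hre : 2*m - (2*m - r') = r' := by omega
      rw [hre] at hrefl
      -- xn m ∣ yn r' - yn (2m - r')... careful direction
      have hsub : (xn a1 m : ℤ) ∣ (yn a1 (2*m - r') : ℤ) - yn a1 j := by
        have hd := dvd_sub h' hrefl
        have : (yn a1 (2*m - r') : ℤ) - yn a1 j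
            = ((yn a1 r' : ℤ) - yn a1 j) - ((yn a1 r' : ℤ) - yn a1 (2*m - r')) := by ring
        rw [this]
        exact hd
      have heq : 2*m - r' = j := y_inj_of_le a1 (by omega) hjm hsub
      have hrj : r' + j = 2*m := by omega
      refine ⟨1 + 2*Q, ?_⟩
      rw [hdecomp]
      calc r' + 4*m*Q + j = (r' + j) + 4*m*Q := by ring
        _ = 2*m + 4*m*Q := by rw [hrj]
        _ = 2*m*(1 + 2*Q) := by ring

theorem exists_pos_dvd_yn (N : ℕ) (hN : 0 < N) : ∃ m, 0 < m ∧ N ∣ yn a1 m := by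
  haveI : NeZero N := ⟨hN.ne'⟩
  have main : ∀ k l : ℕ, k < l → ((xn a1 k : ZMod N) = xn a1 l) →
      ((yn a1 k : ZMod N) = yn a1 l) → ∃ m, 0 < m ∧ N ∣ yn a1 m := by
    intro k l hkl hx hy
    refine ⟨l - k, by omega, ?_⟩
    have hx' : (N : ℤ) ∣ (xn a1 l : ℤ) - xn a1 k :=
      ((ZMod.natCast_eq_natCast_iff _ _ _).1 hx).dvd
    have hy' : (N : ℤ) ∣ (yn a1 l : ℤ) - yn a1 k :=
      ((ZMod.natCast_eq_natCast_iff _ _ _).1 hy).dvd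
    have hsub := yz_sub a1 (le_of_lt hkl)
    rw [xz_cast, xz_cast, yz_cast, yz_cast, yz_cast] at hsub
    have hdvd : (N : ℤ) ∣ (yn a1 (l - k) : ℤ) := by
      rw [hsub]
      have : (xn a1 k : ℤ) * yn a1 l - (xn a1 l : ℤ) * yn a1 k
          = (xn a1 k : ℤ) * ((yn a1 l : ℤ) - yn a1 k)
            - (yn a1 k : ℤ) * ((xn a1 l : ℤ) - xn a1 k) := by ring
      rw [this]
      exact dvd_sub (hy'.mul_left _) (hx'.mul_left _)
    exact_mod_cast hdvd
  have hcard : Fintype.card (ZMod N × ZMod N) < Fintype.card (Fin (N*N+1)) := by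
    simp [ZMod.card]
  obtain ⟨k, l, hne, he⟩ := Fintype.exists_ne_map_eq_of_card_lt
    (fun t : Fin (N*N+1) => ((xn a1 t : ZMod N), (yn a1 t : ZMod N))) hcard
  have hx := congrArg Prod.fst he
  have hy := congrArg Prod.snd he
  simp only at hx hy
  rcases hne.lt_or_gt with hlt | hlt
  · exact main k l hlt hx hy
  · exact main l k hlt hx.symm hy.symm

theorem forward_exists (A B C : ℕ) (hA : 1 < A) (hB : 0 < B) (hC : 0 < C)
    (hCy : C = yn hA B) :
    ∃ i j D E F G H I2 : ℕ,
      D = (A ^ 2 - 1) * C ^ 2 + 1 ∧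
      E = 2 * (i + 1) * D * C ^ 2 ∧
      F = (A ^ 2 - 1) * E ^ 2 + 1 ∧
      G = A + F * (F - A) ∧
      H = B + 2 * j * C ∧
      I2 = (G ^ 2 - 1) * H ^ 2 + 1 ∧
      (∃ w : ℕ, D * F * I2 = w ^ 2) ∧ ((F : ℤ) ∣ (H : ℤ) - (C : ℤ)) ∧ B ≤ C := by
  have hA1 : 1 ≤ A * A := by nlinarith
  have hpow : A ^ 2 - 1 = A * A - 1 := by rw [pow_two]
  have hC2 : 0 < C ^ 2 := pow_pos hC 2
  set D := (A ^ 2 - 1) * C ^ 2 + 1 with hDdef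
  have hD2 : D = xn hA B * xn hA B := by
    rw [hDdef, hpow, pow_two, hCy]
    exact (xx_eq hA B).symm
  have hDpos : 0 < D := by omega
  set N := 2 * D * C ^ 2 with hNdef
  have hN : 0 < N := by positivity
  obtain ⟨m, hm, hdvdN⟩ := exists_pos_dvd_yn hA N hN
  set q := yn hA m / N with hqdef
  have hqN : N * q = yn hA m := Nat.mul_div_cancel' hdvdN
  have hym : 0 < yn hA m := strictMono_y hA hm
  have hq1 : 1 ≤ q := by
    rcases Nat.eq_zero_or_pos q with h0 | h0
    · rw [h0, mul_zero] at hqN; omega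
    · exact h0
  set E := 2 * (q - 1 + 1) * D * C ^ 2 with hEdef
  have hEym : E = yn hA m := by
    rw [hEdef, Nat.sub_add_cancel hq1, ← hqN, hNdef]; ring
  set F := (A ^ 2 - 1) * E ^ 2 + 1 with hFdef
  have hF2 : F = xn hA m * xn hA m := by
    rw [hFdef, hpow, pow_two, hEym]
    exact (xx_eq hA m).symm
  have hE1 : 1 ≤ E := by rw [hEym]; omega
  have hFA : A < F := by
    have h1 : A + 1 ≤ A * A := by nlinarith
    have h2 : A * A - 1 ≤ (A * A - 1) * E ^ 2 :=
      Nat.le_mul_of_pos_right _ (by positivity)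
    rw [hFdef, hpow]
    omega
  set G := A + F * (F - A) with hGdef
  have hG1 : 1 < G := by
    have : 0 < F * (F - A) := Nat.mul_pos (by omega) (by omega)
    omega
  have hGA : G ≡ A [MOD F] := by
    have hsub : G - A = F * (F - A) := by omega
    have : F ∣ G - A := by rw [hsub]; exact dvd_mul_right _ _
    exact ((Nat.modEq_iff_dvd' (by omega : A ≤ G)).2 this).symm
  have h2CE : (2*C) ∣ E := ⟨(q - 1 + 1) * D * C, by rw [hEdef, pow_two]; ring⟩
  have hEF1 : E ∣ F - 1 := by
    have h : F - 1 = (A ^ 2 - 1) * E ^ 2 := by rw [hFdef]; omega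
    rw [h, pow_two]
    exact ⟨(A ^ 2 - 1) * E, by ring⟩
  have h2CF1 : (2*C) ∣ F - 1 := h2CE.trans hEF1
  have h1F : (1:ℕ) ≤ F := by omega
  have hGz : (G:ℤ) - 1 = ((F:ℤ) - 1) * (1 + (F:ℤ) - A) := by
    have hcast : ((F - A : ℕ) : ℤ) = (F:ℤ) - A := by
      have := hFA.le; omega
    rw [hGdef]
    push_cast [hcast]
    ring
  have h2CG1 : (2*C) ∣ G - 1 := by
    obtain ⟨t, ht⟩ := h2CF1
    have htz : (F:ℤ) - 1 = 2 * (C:ℤ) * t := by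
      have h := congrArg (Nat.cast : ℕ → ℤ) ht
      rw [Nat.cast_sub h1F, Nat.cast_one] at h
      rw [h]
      push_cast
      ring
    have h1G : (1:ℕ) ≤ G := by omega
    have h2 : ((2*C : ℕ):ℤ) ∣ ((G - 1 : ℕ):ℤ) := by
      rw [Nat.cast_sub h1G, Nat.cast_one, hGz, htz]
      exact ⟨t * (1 + (F:ℤ) - A), by push_cast; ring⟩
    exact_mod_cast h2
  have hyGB : B ≤ yn hG1 B := yn_ge_n hG1 B
  have hmodG : yn hG1 B ≡ B [MOD 2*C] := (yn_modEq_a_sub_one hG1 B).of_dvd h2CG1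
  have h2CH : (2*C) ∣ yn hG1 B - B := (Nat.modEq_iff_dvd' hyGB).1 hmodG.symm
  set j := (yn hG1 B - B) / (2*C) with hjdef
  have hjC : 2*C*j = yn hG1 B - B := Nat.mul_div_cancel' h2CH
  set H := B + 2*j*C with hHdef
  have hHy : H = yn hG1 B := by
    rw [hHdef]
    have h : 2*j*C = 2*C*j := by ring
    rw [h, hjC]
    omega
  set I2 := (G ^ 2 - 1) * H ^ 2 + 1 with hI2def
  have hpowG : G ^ 2 - 1 = G * G - 1 := by rw [pow_two]
  have hI2 : I2 = xn hG1 B * xn hG1 B := by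
    rw [hI2def, hpowG, pow_two, hHy]
    exact (xx_eq hG1 B).symm
  have hyy : yn hG1 B ≡ yn hA B [MOD F] := (xy_modEq_of_modEq hG1 hA hGA B).2
  have hFH : (F:ℤ) ∣ (H:ℤ) - C := by
    rw [hHy, hCy]
    exact hyy.symm.dvd
  refine ⟨q - 1, j, D, E, F, G, H, I2, rfl, rfl, rfl, rfl, rfl, rfl,
    ⟨xn hA B * xn hA m * xn hG1 B, ?_⟩, hFH, ?_⟩
  · rw [hD2, hF2, hI2]; ring
  · rw [hCy]; exact yn_ge_n hA B

set_option maxHeartbeats 2000000 in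
theorem backward_aux (A B C i j D E F G H I2 : ℕ) (hA : 1 < A) (hB : 0 < B) (hC : 0 < C)
    (hD : D = (A ^ 2 - 1) * C ^ 2 + 1)
    (hE : E = 2 * (i + 1) * D * C ^ 2)
    (hF : F = (A ^ 2 - 1) * E ^ 2 + 1)
    (hG : G = A + F * (F - A))
    (hH : H = B + 2 * j * C)
    (hI : I2 = (G ^ 2 - 1) * H ^ 2 + 1)
    (hsq : ∃ w : ℕ, D * F * I2 = w ^ 2)
    (hFH : (F : ℤ) ∣ (H : ℤ) - (C : ℤ))
    (hBC : B ≤ C) : C = yn hA B := by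
  have hA1 : 1 ≤ A * A := by nlinarith
  have hA2 : A + 1 ≤ A * A := by nlinarith
  have hpow : A ^ 2 - 1 = A * A - 1 := by rw [pow_two]
  have hC2 : 0 < C ^ 2 := pow_pos hC 2
  have hDpos : 0 < D := by rw [hD]; omega
  have hDbig : A * A ≤ D := by
    have h1 : A * A - 1 ≤ (A * A - 1) * C ^ 2 := Nat.le_mul_of_pos_right _ hC2
    rw [hD, hpow]; omega
  have hEpos : 0 < E := by rw [hE]; positivity
  have hE8 : 8 ≤ E := by
    have h4 : 4 ≤ A * A := by nlinarith
    have h4D : 4 ≤ D := by omega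
    have hchain : 2 * 1 * 4 * 1 ≤ 2 * (i + 1) * D * C ^ 2 :=
      Nat.mul_le_mul (Nat.mul_le_mul (Nat.mul_le_mul (le_refl 2) (by omega)) h4D) hC2
    rw [hE]
    omega
  have hFA : A < F := by
    have h2 : A * A - 1 ≤ (A * A - 1) * E ^ 2 :=
      Nat.le_mul_of_pos_right _ (by positivity)
    rw [hF, hpow]; omega
  have h1F : (1:ℕ) ≤ F := by omega
  have hG1 : 1 < G := by
    have : 0 < F * (F - A) := Nat.mul_pos (by omega) (by omega)
    rw [hG]; omega
  have h1G : (1:ℕ) ≤ G := by omega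
  -- squares are coprime
  have hDE : D ∣ E := ⟨2 * (i+1) * C ^ 2, by rw [hE]; ring⟩
  have hF1eq : F - 1 = (A ^ 2 - 1) * E ^ 2 := by rw [hF]; omega
  have hEF1 : E ∣ F - 1 := by
    rw [hF1eq, pow_two]
    exact ⟨(A ^ 2 - 1) * E, by ring⟩
  have hDF1 : D ∣ F - 1 := hDE.trans hEF1
  have hcopDF : Nat.Coprime D F := by
    obtain ⟨t, ht⟩ := hDF1
    have hFt : F = 1 + D * t := by omega
    rw [hFt]
    exact (Nat.coprime_add_mul_left_right D 1 t).2 (Nat.coprime_one_right D)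
  -- G ≡ 1 mod (F-1)-multiples : (G:ℤ) - 1 = (F-1)(1+F-A)
  have hGz : (G:ℤ) - 1 = ((F:ℤ) - 1) * (1 + (F:ℤ) - A) := by
    have hcast : ((F - A : ℕ) : ℤ) = (F:ℤ) - A := by
      have := hFA.le; omega
    rw [hG]
    push_cast [hcast]
    ring
  have hDG1 : (D:ℤ) ∣ (G:ℤ) - 1 := by
    obtain ⟨t, ht⟩ := hDF1
    have htz : (F:ℤ) - 1 = (D:ℤ) * t := by
      have h := congrArg (Nat.cast : ℕ → ℤ) ht
      rw [Nat.cast_sub h1F, Nat.cast_one] at h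
      rw [h]; push_cast; ring
    have hfin : (G:ℤ) - 1 = (D:ℤ) * (t * (1 + (F:ℤ) - A)) := by
      rw [hGz, htz]; ring
    exact ⟨_, hfin⟩
  have hG2 : 1 ≤ G ^ 2 := Nat.one_le_pow 2 G (by omega)
  have hIz : (I2:ℤ) = ((G:ℤ) * G - 1) * ((H:ℤ) * H) + 1 := by
    have h := congrArg (Nat.cast : ℕ → ℤ) hI
    rw [Nat.cast_add, Nat.cast_mul, Nat.cast_sub hG2] at h
    push_cast at h
    rw [h]; ring
  have hDI1 : (D:ℤ) ∣ (I2:ℤ) - 1 := by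
    have : (I2:ℤ) - 1 = ((G:ℤ) - 1) * (((G:ℤ) + 1) * ((H:ℤ) * H)) := by
      rw [hIz]; ring
    rw [this]
    exact hDG1.mul_right _
  have hcopDI : Nat.Coprime D I2 := by
    have hI1 : 1 ≤ I2 := by rw [hI]; omega
    have : D ∣ I2 - 1 := by
      have h2 : (D:ℤ) ∣ ((I2 - 1 : ℕ) : ℤ) := by
        rw [Nat.cast_sub hI1, Nat.cast_one]; exact hDI1
      exact_mod_cast h2
    obtain ⟨t, ht⟩ := this
    have hIt : I2 = 1 + D * t := by omega
    rw [hIt]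
    exact (Nat.coprime_add_mul_left_right D 1 t).2 (Nat.coprime_one_right D)
  -- I2 ≡ D mod F
  have hGA : (F:ℤ) ∣ (G:ℤ) - A := by
    have hcast : ((F - A : ℕ) : ℤ) = (F:ℤ) - A := by have := hFA.le; omega
    have h := congrArg (Nat.cast : ℕ → ℤ) hG
    push_cast [hcast] at h
    rw [show (G:ℤ) - A = (F:ℤ) * ((F:ℤ) - A) from by rw [h]; ring]
    exact Dvd.intro _ rfl
  have hDz : (D:ℤ) = ((A:ℤ) * A - 1) * ((C:ℤ) * C) + 1 := by
    have h := congrArg (Nat.cast : ℕ → ℤ) hD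
    rw [hpow] at h
    rw [Nat.cast_add, Nat.cast_mul, Nat.cast_sub hA1] at h
    push_cast at h
    rw [h]; ring
  have hFDI : (F:ℤ) ∣ (I2:ℤ) - D := by
    have key : (I2:ℤ) - D = ((G:ℤ) - A) * (((G:ℤ) + A) * ((H:ℤ)*H))
        + ((A:ℤ)*A - 1) * (((H:ℤ) - C) * ((H:ℤ) + C)) := by
      rw [hIz, hDz]; ring
    rw [key]
    exact dvd_add (hGA.mul_right _) ((hFH.mul_right _).mul_left _)
  have hcopFI : Nat.Coprime F I2 := by
    have h1 : (Nat.gcd F I2 : ℤ) ∣ (D:ℤ) := by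
      have hgF : (Nat.gcd F I2 : ℤ) ∣ (F:ℤ) := Int.natCast_dvd_natCast.2 (Nat.gcd_dvd_left _ _)
      have hgI : (Nat.gcd F I2 : ℤ) ∣ (I2:ℤ) := Int.natCast_dvd_natCast.2 (Nat.gcd_dvd_right _ _)
      have hDe : (D:ℤ) = (I2:ℤ) - ((I2:ℤ) - D) := by ring
      rw [hDe]
      exact dvd_sub hgI (hgF.trans hFDI)
    have h2 : Nat.gcd F I2 ∣ D := Int.natCast_dvd_natCast.1 h1
    have h3 : Nat.gcd F I2 ∣ Nat.gcd D F := Nat.dvd_gcd h2 (Nat.gcd_dvd_left _ _)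
    have hg : Nat.gcd D F = 1 := hcopDF
    rw [hg] at h3
    exact Nat.dvd_one.1 h3
  -- extract the three squares
  obtain ⟨w, hw⟩ := hsq
  obtain ⟨d0, hd0⟩ : ∃ d0 : ℕ, D = d0 ^ 2 := by
    apply exists_eq_pow_of_mul_eq_pow (a := D) (b := F * I2) (c := w)
    · rw [Nat.isUnit_iff]
      exact hcopDF.mul_right hcopDI
    · rw [← hw]; ring
  obtain ⟨f0, hf0⟩ : ∃ f0 : ℕ, F = f0 ^ 2 := by
    apply exists_eq_pow_of_mul_eq_pow (a := F) (b := D * I2) (c := w)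
    · rw [Nat.isUnit_iff]
      exact hcopDF.symm.mul_right hcopFI
    · rw [← hw]; ring
  obtain ⟨w0, hw0⟩ : ∃ w0 : ℕ, I2 = w0 ^ 2 := by
    apply exists_eq_pow_of_mul_eq_pow (a := I2) (b := D * F) (c := w)
    · rw [Nat.isUnit_iff]
      exact hcopDI.symm.mul_right hcopFI.symm
    · rw [← hw]; ring
  -- apply eq_pell
  obtain ⟨n, hn_x, hn_y⟩ := eq_pell' hA (x := d0) (y := C) (by
    calc d0 * d0 = d0 ^ 2 := (pow_two d0).symm
      _ = D := hd0.symm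
      _ = (A * A - 1) * (C * C) + 1 := by rw [hD, hpow, pow_two])
  obtain ⟨m, hm_x, hm_y⟩ := eq_pell' hA (x := f0) (y := E) (by
    calc f0 * f0 = f0 ^ 2 := (pow_two f0).symm
      _ = F := hf0.symm
      _ = (A * A - 1) * (E * E) + 1 := by rw [hF, hpow, pow_two])
  have hpowG : G ^ 2 - 1 = G * G - 1 := by rw [pow_two]
  obtain ⟨r, hr_x, hr_y⟩ := eq_pell' hG1 (x := w0) (y := H) (by
    calc w0 * w0 = w0 ^ 2 := (pow_two w0).symm
      _ = I2 := hw0.symm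
      _ = (G * G - 1) * (H * H) + 1 := by rw [hI, hpowG, pow_two])
  -- positivity of indices
  have hn0 : 0 < n := by
    rcases Nat.eq_zero_or_pos n with h0 | h0
    · rw [h0, yn_zero] at hn_y; omega
    · exact h0
  -- divisibility C*C ∣ E gives C ∣ m
  have hC2dvdE : C * C ∣ E := ⟨2 * (i + 1) * D, by rw [hE, pow_two]; ring⟩
  have hyyd : yn hA n * yn hA n ∣ yn hA m := by
    rw [← hn_y, ← hm_y]; exact hC2dvdE
  have hCdm : C ∣ m := by
    have := dvd_of_ysq_dvd hA hyyd
    rwa [← hn_y] at this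
  have hm2 : 2 ≤ m := by
    by_contra hcon
    push_neg at hcon
    interval_cases m
    · rw [yn_zero] at hm_y; omega
    · rw [yn_one] at hm_y; omega
  have hnC : n ≤ C := by
    have := yn_ge_n hA n
    omega
  have hnm : n ≤ m := by
    have h1 : C ≤ m := Nat.le_of_dvd (by omega) hCdm
    omega
  -- the key congruence mod xn m
  have hGAmod : G ≡ A [MOD F] := by
    have hsub : G - A = F * (F - A) := by rw [hG]; exact Nat.add_sub_cancel_left A (F * (F - A))
    have hdv : F ∣ G - A := by rw [hsub]; exact dvd_mul_right _ _
    exact ((Nat.modEq_iff_dvd' (by rw [hG]; omega : A ≤ G)).2 hdv).symm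
  have hyy2 : yn hG1 r ≡ yn hA r [MOD F] := (xy_modEq_of_modEq hG1 hA hGAmod r).2
  have key : (F:ℤ) ∣ (yn hA r : ℤ) - yn hA n := by
    have h1 : (F:ℤ) ∣ (yn hA r : ℤ) - yn hG1 r := hyy2.dvd
    have h2 : (F:ℤ) ∣ (yn hG1 r : ℤ) - yn hA n := by
      rw [← hn_y, ← hr_y]; exact hFH
    have h3 : (yn hA r : ℤ) - yn hA n
        = ((yn hA r : ℤ) - yn hG1 r) + ((yn hG1 r : ℤ) - yn hA n) := by ring
    rw [h3]
    exact dvd_add h1 h2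
  have hxmF : xn hA m ∣ F := ⟨xn hA m, by rw [hf0, hm_x, pow_two]⟩
  have key2 : (xn hA m : ℤ) ∣ (yn hA r : ℤ) - yn hA n :=
    dvd_trans (Int.natCast_dvd_natCast.2 hxmF) key
  have hcases := y_modEq_cases hA hm2 hn0 hnm key2
  -- congruences modulo 2C
  have h2C2m : 2 * C ∣ 2 * m := mul_dvd_mul_left 2 hCdm
  have h2CE : 2 * C ∣ E := ⟨(i + 1) * D * C, by rw [hE]; ring⟩
  have h2CF1 : 2 * C ∣ F - 1 := h2CE.trans hEF1
  have h2CG1 : 2 * C ∣ G - 1 := by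
    obtain ⟨t, ht⟩ := h2CF1
    have htz : (F:ℤ) - 1 = (2 * (C:ℤ)) * t := by
      have h := congrArg (Nat.cast : ℕ → ℤ) ht
      rw [Nat.cast_sub h1F, Nat.cast_one] at h
      rw [h]; push_cast; ring
    have hfin : ((G - 1 : ℕ) : ℤ) = ((2 * C : ℕ) : ℤ) * (t * (1 + (F:ℤ) - A)) := by
      rw [Nat.cast_sub h1G, Nat.cast_one, hGz, htz]
      push_cast; ring
    have : ((2 * C : ℕ) : ℤ) ∣ ((G - 1 : ℕ) : ℤ) := ⟨_, hfin⟩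
    exact_mod_cast this
  have hBH : B ≤ H := by rw [hH]; omega
  have h5 : H - B = 2 * C * j := by
    rw [hH, show 2 * j * C = 2 * C * j from by ring]
    exact Nat.add_sub_cancel_left B (2 * C * j)
  have hBHmod : B ≡ H [MOD 2 * C] := (Nat.modEq_iff_dvd' hBH).2 ⟨j, h5⟩
  have hHrmod : H ≡ r [MOD 2 * C] := by
    rw [hr_y]
    exact (yn_modEq_a_sub_one hG1 r).of_dvd h2CG1
  have hBr : B ≡ r [MOD 2 * C] := hBHmod.trans hHrmod
  rcases hcases with hcase | hcase
  · have h1 : r ≡ n [MOD 2 * C] := hcase.of_dvd h2C2m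
    have h2 : B ≡ n [MOD 2 * C] := hBr.trans h1
    have hBeq : B = n := h2.eq_of_lt_of_lt (by omega) (by omega)
    rw [hBeq]; exact hn_y
  · have h1 : 2 * C ∣ r + n := dvd_trans h2C2m hcase
    have h2 : B + n ≡ r + n [MOD 2 * C] := hBr.add_right n
    have h3 : 2 * C ∣ B + n :=
      (Nat.modEq_zero_iff_dvd).1 (h2.trans ((Nat.modEq_zero_iff_dvd).2 h1))
    have h4 : 2 * C ≤ B + n := Nat.le_of_dvd (by omega) h3
    have hBeq : B = n := by omega
    rw [hBeq]; exact hn_y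

end MR75

/-- **Theorem 4 of Matiyasevich–Robinson (1975).** For `A > 1`, `B > 0`, `C > 0`:
`C = ψ_A(B)` iff there exist `i`, `j` such that, with
`D = (A² − 1)C² + 1`, `E = 2(i+1)DC²`, `F = (A² − 1)E² + 1`, `G = A + F(F − A)`,
`H = B + 2jC`, `I = (G² − 1)H² + 1`, the number `DFI` is a perfect square,
`F ∣ H − C` (as integers), and `B ≤ C`. -/
theorem psi_characterization (A B C : ℕ) (hA : 1 < A) (hB : 0 < B) (hC : 0 < C) :
    C = Pell.yn hA B ↔
      ∃ i j : ℕ,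
        let D := (A ^ 2 - 1) * C ^ 2 + 1
        let E := 2 * (i + 1) * D * C ^ 2
        let F := (A ^ 2 - 1) * E ^ 2 + 1
        let G := A + F * (F - A)
        let H := B + 2 * j * C
        let I := (G ^ 2 - 1) * H ^ 2 + 1
        (∃ a : ℕ, D * F * I = a ^ 2) ∧ (F : ℤ) ∣ (H : ℤ) - (C : ℤ) ∧ B ≤ C := by
  constructor
  · intro hCy
    obtain ⟨i, j, D, E, F, G, H, I2, rfl, rfl, rfl, rfl, rfl, rfl, hs, hf, hb⟩ :=
      MR75.forward_exists A B C hA hB hC hCy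
    exact ⟨i, j, hs, hf, hb⟩
  · intro h
    obtain ⟨i, j, h'⟩ := h
    exact MR75.backward_aux A B C i j _ _ _ _ _ _ hA hB hC
      rfl rfl rfl rfl rfl rfl h'.1 h'.2.1 h'.2.2
end

section
/- Let n, s, y be natural numbers with n ≥ s ≥ 1. Then y = C(n, s) if and only if there exists a natural number x with x > 4·n^s such that y is the remainder of ⌊(x + 1)^n / x^s⌋ modulo x. -/
open Finset

lemma geom_bound (x : ℕ) (hx : 2 ≤ x) : ∀ s : ℕ, 1 ≤ s →
    ∑ k ∈ range s, x ^ k ≤ 2 * x ^ (s - 1) := by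
  intro s
  induction s with
  | zero => intro h; omega
  | succ m ih =>
    intro _
    rcases Nat.eq_zero_or_pos m with hm | hm
    · subst hm; simp
    · rw [Finset.sum_range_succ]
      have h1 := ih hm
      have h2 : 2 * x ^ (m - 1) ≤ x ^ m := by
        calc 2 * x ^ (m - 1) ≤ x * x ^ (m - 1) := by
              exact Nat.mul_le_mul_right _ hx
          _ = x ^ m := by
              rw [← pow_succ']
              congr 1
              omega
      calc ∑ k ∈ range m, x ^ k + x ^ m ≤ x ^ m + x ^ m := by
            exact Nat.add_le_add_right (le_trans h1 h2) _
        _ = 2 * x ^ m := by ring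
        _ = 2 * x ^ (m + 1 - 1) := by norm_num

lemma key_lemma (n s : ℕ) (hs : 1 ≤ s) (hns : s ≤ n) (x : ℕ)
    (hx : 4 * n ^ s < x) : ((x + 1) ^ n / x ^ s) % x = n.choose s := by
  have hn1 : 1 ≤ n := le_trans hs hns
  have hns' : n ^ s ≥ 1 := Nat.one_le_pow _ _ hn1
  have hx2 : 2 ≤ x := by omega
  have hx0 : 0 < x := by omega
  set A := ∑ k ∈ range s, n.choose k * x ^ k with hA
  set B := ∑ k ∈ Finset.Ico s (n + 1), n.choose k * x ^ (k - s) with hB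
  -- expansion
  have expand : (x + 1) ^ n = B * x ^ s + A := by
    have h1 : (x + 1) ^ n = ∑ k ∈ range (n + 1), n.choose k * x ^ k := by
      rw [add_pow]
      apply Finset.sum_congr rfl
      intro k hk
      simp [mul_comm]
    have h2 : B * x ^ s = ∑ k ∈ Finset.Ico s (n + 1), n.choose k * x ^ k := by
      rw [hB, Finset.sum_mul]
      apply Finset.sum_congr rfl
      intro k hk
      simp only [Finset.mem_Ico] at hk
      rw [mul_assoc, ← pow_add]
      congr 2
      omega
    rw [h1, h2, hA, ← Finset.sum_range_add_sum_Ico (fun k => n.choose k * x ^ k)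
      (show s ≤ n + 1 by omega)]
    exact add_comm _ _
  -- A < x ^ s
  have hAlt : A < x ^ s := by
    have h1 : A ≤ n ^ s * ∑ k ∈ range s, x ^ k := by
      rw [hA, Finset.mul_sum]
      apply Finset.sum_le_sum
      intro k hk
      simp only [Finset.mem_range] at hk
      have : n.choose k ≤ n ^ s :=
        le_trans (Nat.choose_le_pow n k) (Nat.pow_le_pow_right hn1 (by omega))
      exact Nat.mul_le_mul_right _ this
    have h2 : n ^ s * ∑ k ∈ range s, x ^ k ≤ n ^ s * (2 * x ^ (s - 1)) :=
      Nat.mul_le_mul_left _ (geom_bound x hx2 s hs)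
    have h3 : n ^ s * (2 * x ^ (s - 1)) < x ^ s := by
      have : 2 * n ^ s * x ^ (s - 1) < x * x ^ (s - 1) := by
        apply Nat.mul_lt_mul_of_lt_of_le (by omega) (le_refl _)
        exact pow_pos hx0 _
      calc n ^ s * (2 * x ^ (s - 1)) = 2 * n ^ s * x ^ (s - 1) := by ring
        _ < x * x ^ (s - 1) := this
        _ = x ^ s := by rw [← pow_succ']; congr 1; omega
    omega
  -- division
  have hxs0 : 0 < x ^ s := pow_pos hx0 _
  have hdiv : (x + 1) ^ n / x ^ s = B := by
    rw [expand, add_comm, Nat.add_mul_div_right _ _ hxs0,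
      Nat.div_eq_of_lt hAlt, Nat.zero_add]
  -- remainder
  have hsplit : B = n.choose s + x * ∑ k ∈ Finset.Ico (s + 1) (n + 1),
      n.choose k * x ^ (k - s - 1) := by
    rw [hB, Finset.sum_eq_sum_Ico_succ_bot (by omega : s < n + 1)]
    congr 1
    · simp
    · rw [Finset.mul_sum]
      apply Finset.sum_congr rfl
      intro k hk
      simp only [Finset.mem_Ico] at hk
      have : x ^ (k - s) = x * x ^ (k - s - 1) := by
        rw [← pow_succ']
        congr 1
        omega
      rw [this]; ring
  have hcs : n.choose s < x :=
    lt_of_le_of_lt (Nat.choose_le_pow n s) (by omega)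
  rw [hdiv, hsplit, Nat.add_mul_mod_self_left, Nat.mod_eq_of_lt hcs]

/-- For `n ≥ s ≥ 1`, `y = C(n, s)` iff there is an `x > 4·nˢ` with
`y = rem(⌊(x+1)ⁿ / xˢ⌋, x)`. -/
theorem choose_eq_iff_rem_div (n s y : ℕ) (hs : 1 ≤ s) (hns : s ≤ n) :
    y = n.choose s ↔
      ∃ x : ℕ, 4 * n ^ s < x ∧ y = ((x + 1) ^ n / x ^ s) % x := by
  constructor
  · intro hy
    refine ⟨4 * n ^ s + 1, by omega, ?_⟩
    rw [key_lemma n s hs hns _ (by omega), hy]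
  · rintro ⟨x, hx, hy⟩
    rw [hy, key_lemma n s hs hns x hx]
end

section
/- Let n, s, x be natural numbers with n ≥ s ≥ 1 and x > n^s. Then C(n, s) equals the remainder of ⌊(x + 1)^n / x^s⌋ modulo x. -/
open Finset in
lemma low_sum_lt (n s x : ℕ) (hs : 1 ≤ s) (hns : s ≤ n) (hx : n ^ s < x) :
    ∑ k ∈ Finset.range s, x ^ k * n.choose k < x ^ s := by
  induction s with
  | zero => omega
  | succ s ih =>
    rcases Nat.eq_zero_or_pos s with rfl | hs'
    · rw [Finset.sum_range_one]
      simp only [pow_zero, Nat.choose_zero_right, mul_one, zero_add, pow_one] at *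
      omega
    · have hn2 : 2 ≤ n := by omega
      have hxs : n ^ s < x :=
        lt_of_le_of_lt (Nat.pow_le_pow_right (by omega) (by omega)) hx
      have ihs := ih hs' (by omega) hxs
      rw [Finset.sum_range_succ]
      have hcb : n.choose s ≤ n ^ s := Nat.choose_le_pow n s
      have hle : 1 + n.choose s ≤ x := by
        have : 1 + n ^ s ≤ n ^ (s + 1) := by
          have : 2 * n ^ s ≤ n * n ^ s := Nat.mul_le_mul_right _ hn2
          have h1 : 1 ≤ n ^ s := Nat.one_le_pow _ _ (by omega)
          calc 1 + n ^ s ≤ n ^ s + n ^ s := by omega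
            _ = 2 * n ^ s := by ring
            _ ≤ n * n ^ s := this
            _ = n ^ (s + 1) := by ring
        omega
      calc ∑ k ∈ Finset.range s, x ^ k * n.choose k + x ^ s * n.choose s
          < x ^ s + x ^ s * n.choose s := by omega
        _ = x ^ s * (1 + n.choose s) := by ring
        _ ≤ x ^ s * x := Nat.mul_le_mul_left _ hle
        _ = x ^ (s + 1) := by ring

/-- For `n ≥ s ≥ 1` and `x > nˢ`, the binomial coefficient `C(n, s)` equals the
remainder of `⌊(x+1)ⁿ / xˢ⌋` modulo `x`. -/
theorem choose_eq_rem_div (n s x : ℕ) (hs : 1 ≤ s) (hns : s ≤ n) (hx : n ^ s < x) :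
    n.choose s = ((x + 1) ^ n / x ^ s) % x := by
  have hxpos : 0 < x := by
    have : 1 ≤ n ^ s := Nat.one_le_pow _ _ (by omega)
    omega
  have hxs : 0 < x ^ s := Nat.pow_pos hxpos
  have hexp : (x + 1) ^ n = ∑ k ∈ Finset.range (n + 1), x ^ k * n.choose k := by
    rw [add_pow]; simp
  have hsplit : n + 1 = s + (n + 1 - s) := by omega
  obtain ⟨m, hm⟩ : ∃ m, n + 1 - s = m := ⟨_, rfl⟩
  have hsplit' : n + 1 = s + m := by omega
  have hsum : (x + 1) ^ n = (∑ k ∈ Finset.range s, x ^ k * n.choose k) +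
      x ^ s * ∑ k ∈ Finset.range m, x ^ k * n.choose (s + k) := by
    rw [hexp, hsplit', Finset.sum_range_add, Finset.mul_sum]
    congr 1
    refine Finset.sum_congr rfl fun k _ => ?_
    rw [pow_add]; ring
  have hlow := low_sum_lt n s x hs hns hx
  have hdiv : (x + 1) ^ n / x ^ s =
      ∑ k ∈ Finset.range m, x ^ k * n.choose (s + k) := by
    rw [hsum, Nat.add_mul_div_left _ _ hxs, Nat.div_eq_of_lt hlow, Nat.zero_add]
  rw [hdiv]
  have hns1 : m = (n - s) + 1 := by omega
  rw [hns1, Finset.sum_range_succ']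
  simp only [pow_zero, one_mul, Nat.add_zero]
  have : (∑ k ∈ Finset.range (n - s), x ^ (k + 1) * n.choose (s + (k + 1)))
      = x * ∑ k ∈ Finset.range (n - s), x ^ k * n.choose (s + (k + 1)) := by
    rw [Finset.mul_sum]
    refine Finset.sum_congr rfl fun k _ => ?_
    ring
  rw [this, Nat.mul_add_mod]
  have hcs : n.choose s < x := lt_of_le_of_lt (Nat.choose_le_pow n s) hx
  exact (Nat.mod_eq_of_lt hcs).symm
end

section
/- Let n, s, x be natural numbers with n ≥ s ≥ 1 and x > n^s. Then ⌊(x + 1)^n / x^s⌋ = Σ_{i=0}^{n−s} C(n, s + i)·x^i. -/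
open Finset

/-- For `n ≥ s ≥ 1` and `x > nˢ`, the floor `⌊(x+1)ⁿ / xˢ⌋` is the partial
binomial expansion `Σ_{i=0}^{n−s} C(n, s+i)·xⁱ`. -/
theorem div_pow_eq_partial_binomial_expansion (n s x : ℕ) (hs : 1 ≤ s) (hns : s ≤ n)
    (hx : n ^ s < x) :
    (x + 1) ^ n / x ^ s = ∑ i ∈ Finset.range (n - s + 1), n.choose (s + i) * x ^ i := by
  have hn1 : n ≥ 1 := le_trans hs hns
  have hx1 : 1 ≤ x := le_of_lt (lt_of_le_of_lt (Nat.one_le_pow _ _ hn1) hx)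
  have hsplit : n + 1 = s + (n - s + 1) := by omega
  have hexp : (x + 1) ^ n =
      (∑ k ∈ Finset.range s, x ^ k * n.choose k) +
      (∑ i ∈ Finset.range (n - s + 1), n.choose (s + i) * x ^ i) * x ^ s := by
    rw [add_pow]
    simp only [one_pow, mul_one]
    rw [hsplit, Finset.sum_range_add]
    congr 1
    rw [Finset.sum_mul]
    refine Finset.sum_congr rfl fun i _ => ?_
    rw [pow_add]
    push_cast
    ring
  have hrem : (∑ k ∈ Finset.range s, x ^ k * n.choose k) < x ^ s := by
    calc (∑ k ∈ Finset.range s, x ^ k * n.choose k)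
        ≤ ∑ k ∈ Finset.range s, x ^ (s - 1) * n ^ (s - 1) := by
          refine Finset.sum_le_sum fun k hk => ?_
          have hk' : k ≤ s - 1 := by simp at hk; omega
          exact Nat.mul_le_mul (Nat.pow_le_pow_right hx1 hk')
            (le_trans (Nat.choose_le_pow n k) (Nat.pow_le_pow_right hn1 hk'))
      _ = x ^ (s - 1) * (s * n ^ (s - 1)) := by
          rw [Finset.sum_const, Finset.card_range]; ring
      _ ≤ x ^ (s - 1) * n ^ s := by
          refine Nat.mul_le_mul_left _ ?_
          calc s * n ^ (s - 1) ≤ n * n ^ (s - 1) := Nat.mul_le_mul_right _ hns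
            _ = n ^ s := by rw [← pow_succ']; congr 1; omega
      _ < x ^ (s - 1) * x := by
          exact Nat.mul_lt_mul_of_pos_left hx (Nat.pow_pos hx1)
      _ = x ^ s := by rw [← pow_succ]; congr 1; omega
  rw [hexp, Nat.add_mul_div_right _ _ (Nat.pow_pos hx1),
    Nat.div_eq_of_lt hrem, Nat.zero_add]
end

section
/- Let y₁, z, w be natural numbers with y₁ ≥ 1. Then y₁ divides C(z, w) if and only if there exist natural numbers u, p, q such that (u + 1)^z = p·u^w + q, u ≥ 2^z, q < u^w, y₁ divides u, and y₁ divides p. -/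
open Finset

-- digits bound
lemma aux_choose_lt {z u : ℕ} (h1 : 2 ^ z ≤ u) (h2 : 2 ≤ u) (k : ℕ) :
    z.choose k < u := by
  rcases Nat.lt_or_ge z k with h | h
  · simpa [Nat.choose_eq_zero_of_lt h] using (by omega : 0 < u)
  rcases Nat.eq_zero_or_pos z with rfl | hz
  · interval_cases k
    simpa using (show 1 < u by omega)
  · have hlt : z.choose k < 2 ^ z := by
      rw [← Nat.sum_range_choose z]
      have hk : k ∈ range (z + 1) := by simp; omega
      by_cases hk0 : k = 0
      · exact Finset.single_lt_sum (i := k) (j := z) (by omega) hk (by simp)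
          (by simp [Nat.choose_self]) (fun _ _ _ => Nat.zero_le _)
      · exact Finset.single_lt_sum (i := k) (j := 0) (Ne.symm hk0) hk (by simp)
          (by simp) (fun _ _ _ => Nat.zero_le _)
    omega

lemma aux_decomp (u z w : ℕ) :
    (u + 1) ^ z =
      (∑ k ∈ Finset.Ico w (max (z + 1) w), z.choose k * u ^ (k - w)) * u ^ w +
        ∑ k ∈ Finset.range w, z.choose k * u ^ k := by
  have h1 : (u + 1) ^ z = ∑ k ∈ range (z + 1), z.choose k * u ^ k := by
    rw [add_pow]
    refine Finset.sum_congr rfl fun k hk => ?_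
    push_cast
    ring
  have h2 : ∑ k ∈ range (z + 1), z.choose k * u ^ k
      = ∑ k ∈ range (max (z + 1) w), z.choose k * u ^ k := by
    apply Finset.sum_subset
    · exact Finset.range_subset_range.2 (le_max_left _ _)
    · intro x hx hx'
      simp only [Finset.mem_range] at hx hx'
      rw [Nat.choose_eq_zero_of_lt (by omega), zero_mul]
  have h3 : ∑ k ∈ range w, z.choose k * u ^ k
      + ∑ k ∈ Finset.Ico w (max (z + 1) w), z.choose k * u ^ k
      = ∑ k ∈ range (max (z + 1) w), z.choose k * u ^ k := by
    rw [Finset.range_eq_Ico, Finset.range_eq_Ico]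
    exact Finset.sum_Ico_consecutive _ (Nat.zero_le _) (le_max_right _ _)
  have h4 : ∑ k ∈ Finset.Ico w (max (z + 1) w), z.choose k * u ^ k
      = (∑ k ∈ Finset.Ico w (max (z + 1) w), z.choose k * u ^ (k - w)) * u ^ w := by
    rw [Finset.sum_mul]
    refine Finset.sum_congr rfl fun k hk => ?_
    rw [Finset.mem_Ico] at hk
    rw [mul_assoc, ← pow_add]
    congr 2
    omega
  omega

lemma aux_p_struct (u z w : ℕ) :
    ∑ k ∈ Finset.Ico w (max (z + 1) w), z.choose k * u ^ (k - w)
      = z.choose w + u * ∑ k ∈ Finset.Ico (w + 1) (max (z + 1) w), z.choose k * u ^ (k - w - 1) := by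
  rcases Nat.lt_or_ge w (max (z + 1) w) with h | h
  · rw [Finset.sum_eq_sum_Ico_succ_bot h]
    simp only [Nat.sub_self, pow_zero, mul_one]
    congr 1
    rw [Finset.mul_sum]
    refine Finset.sum_congr rfl fun k hk => ?_
    rw [Finset.mem_Ico] at hk
    rw [← mul_assoc, mul_comm u, mul_assoc]
    congr 1
    rw [← pow_succ']
    congr 1
    omega
  · have hw : max (z + 1) w = w := by omega
    rw [hw]
    simp [Nat.choose_eq_zero_of_lt (by omega : z < w)]

lemma aux_q_lt {u z : ℕ} (hu : ∀ k, z.choose k < u) (w : ℕ) :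
    ∑ k ∈ Finset.range w, z.choose k * u ^ k < u ^ w := by
  induction w with
  | zero => simp
  | succ w ih =>
    rw [Finset.sum_range_succ, pow_succ]
    have h1 : z.choose w * u ^ w + u ^ w ≤ u ^ w * u := by
      have := hu w
      calc z.choose w * u ^ w + u ^ w = u ^ w * (z.choose w + 1) := by ring
        _ ≤ u ^ w * u := Nat.mul_le_mul_left _ (by omega)
    omega

/-- Variable-efficient exponential Diophantine representation of the relation
`y₁ ∣ C(z, w)`: for `y₁ ≥ 1`, `y₁` divides `C(z, w)` iff there exist `u, p, q`
with `(u+1)^z = p·u^w + q`, `u ≥ 2^z`, `q < u^w`, `y₁ ∣ u`, and `y₁ ∣ p`. -/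
theorem dvd_choose_iff (y₁ z w : ℕ) (hy : 1 ≤ y₁) :
    y₁ ∣ z.choose w ↔
      ∃ u p q : ℕ,
        (u + 1) ^ z = p * u ^ w + q ∧ 2 ^ z ≤ u ∧ q < u ^ w ∧ y₁ ∣ u ∧ y₁ ∣ p := by
  constructor
  · intro hdvd
    set u := 2 * 2 ^ z * y₁ with hu
    have hu2 : 2 ≤ u := by
      have h1 : 1 ≤ 2 ^ z := Nat.one_le_two_pow
      calc 2 ≤ 2 * 2 ^ z * 1 := by omega
        _ ≤ u := by rw [hu]; exact Nat.mul_le_mul_left _ hy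
    have huz : 2 ^ z ≤ u := by
      calc 2 ^ z ≤ 2 * 2 ^ z * 1 := by omega
        _ ≤ u := by rw [hu]; exact Nat.mul_le_mul_left _ hy
    refine ⟨u, ∑ k ∈ Finset.Ico w (max (z + 1) w), z.choose k * u ^ (k - w),
      ∑ k ∈ Finset.range w, z.choose k * u ^ k,
      aux_decomp u z w, huz, aux_q_lt (aux_choose_lt huz hu2) w, ⟨2 * 2 ^ z, by ring⟩, ?_⟩
    rw [aux_p_struct]
    exact Nat.dvd_add hdvd (Dvd.dvd.mul_right ⟨2 * 2 ^ z, by ring⟩ _)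
  · rintro ⟨u, p, q, heq, huz, hq, hyu, hyp⟩
    rcases Nat.lt_or_ge u 2 with hu2 | hu2
    · have hu1 : u = 1 := by
        have h1 : 1 ≤ 2 ^ z := Nat.one_le_two_pow
        omega
      have hy1 : y₁ = 1 := Nat.eq_one_of_dvd_one (hu1 ▸ hyu)
      simp [hy1]
    · have hlt := aux_choose_lt huz hu2
      have hpow : 0 < u ^ w := Nat.pow_pos (by omega)
      set p₀ := ∑ k ∈ Finset.Ico w (max (z + 1) w), z.choose k * u ^ (k - w) with hp₀
      set q₀ := ∑ k ∈ Finset.range w, z.choose k * u ^ k with hq₀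
      have hq₀lt : q₀ < u ^ w := aux_q_lt hlt w
      have heq2 : p * u ^ w + q = p₀ * u ^ w + q₀ :=
        heq.symm.trans (by rw [hp₀, hq₀]; exact aux_decomp u z w)
      have hpp : p = p₀ := by
        have h1 : (p * u ^ w + q) / u ^ w = p := by
          rw [mul_comm, Nat.mul_add_div hpow, Nat.div_eq_of_lt hq]; omega
        have h2 : (p₀ * u ^ w + q₀) / u ^ w = p₀ := by
          rw [mul_comm, Nat.mul_add_div hpow, Nat.div_eq_of_lt hq₀lt]; omega
        rw [← h1, heq2, h2]
      have hstruct := aux_p_struct u z w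
      rw [← hp₀] at hstruct
      have hur : y₁ ∣ u * ∑ k ∈ Finset.Ico (w + 1) (max (z + 1) w),
          z.choose k * u ^ (k - w - 1) := hyu.mul_right _
      have : y₁ ∣ z.choose w + u * ∑ k ∈ Finset.Ico (w + 1) (max (z + 1) w),
          z.choose k * u ^ (k - w - 1) := by rw [← hstruct, ← hpp]; exact hyp
      exact (Nat.dvd_add_iff_left hur).mpr this
end
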